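/- arXiv:1707.03202 — 4 statements merged into one kernel-verified Lean document; each statement's English description precedes it below -/
import Mathlib

section
/- Choice on the natural numbers C_ℕ is strongly Weihrauch equivalent to the complementary minimum function min^c, and also to the maximum function max on bounded sequences. -/
open scoped Classical

/-! ## Basic notions of Weihrauch complexity -/

/-- The finite prefix of length `m` of a point of Baire space, as a list. -/
def pref (p : ℕ → ℕ) (m : ℕ) : List ℕ := List.ofFn (fun i : Fin m => p i)

/-- Type-2 computability of a partial function on Baire space, defined via monotone
computable word functions producing longer and longer prefixes of the output. -/
def BaireComputable (F : (ℕ → ℕ) →. (ℕ → ℕ)) : Prop :=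
  ∃ ψ : List ℕ → List ℕ, Computable ψ ∧
    (∀ u v : List ℕ, u <+: v → ψ u <+: ψ v) ∧
    ∀ p q, q ∈ F p → ∀ n, ∃ m, (ψ (pref p m))[n]? = some (q n)

/-- The interleaving pairing `⟨p,q⟩` on Baire space. -/
def pairB (p q : ℕ → ℕ) : ℕ → ℕ := fun n => if n % 2 = 0 then p (n / 2) else q (n / 2)

def evenPart (r : ℕ → ℕ) : ℕ → ℕ := fun n => r (2 * n)

def oddPart (r : ℕ → ℕ) : ℕ → ℕ := fun n => r (2 * n + 1)

/-- The `i`-th component of the countable tupling `⟨p₀,p₁,…⟩⟨i,k⟩ = pᵢ(k)`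
(using the Cantor pairing). -/
def proj (r : ℕ → ℕ) (i : ℕ) : ℕ → ℕ := fun k => r (Nat.pair i k)

/-- A represented space: a set `X` together with a surjective partial map
from Baire space onto `X`. -/
structure RepSp (X : Type*) where
  δ : (ℕ → ℕ) →. X
  surj : ∀ x : X, ∃ p, x ∈ δ p

theorem mem_part_mk {α : Type*} {D : Prop} {g : D → α} {a : α} (h : D) (e : g h = a) :
    a ∈ Part.mk D g := Part.mem_mk_iff.mpr ⟨h, e⟩

/-- The identity representation of Baire space. -/
def repBaire : RepSp (ℕ → ℕ) where
  δ := fun p => Part.some p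
  surj := fun p => ⟨p, Part.mem_some p⟩

/-- The standard representation of the natural numbers. -/
def repNat : RepSp ℕ where
  δ := fun p => Part.some (p 0)
  surj := fun n => ⟨fun _ => n, Part.mem_some n⟩

/-- `F` is a realizer of the problem `f :⊆ X ⇉ Y` (a problem is a multi-valued
function `f : X → Set Y`, whose domain is the set of `x` with `f x` nonempty). -/
def Realizes {X Y : Type*} (δX : RepSp X) (δY : RepSp Y)
    (f : X → Set Y) (F : (ℕ → ℕ) →. (ℕ → ℕ)) : Prop :=
  ∀ p x, x ∈ δX.δ p → (f x).Nonempty → ∃ q ∈ F p, ∃ y ∈ δY.δ q, y ∈ f x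

/-- Weihrauch reducibility: `f ≤_W g` iff there are computable `H, K` such that
`p ↦ H⟨p, G(K(p))⟩` realizes `f` whenever `G` realizes `g`. -/
def WRed {X Y Z W : Type*} (δX : RepSp X) (δY : RepSp Y) (δZ : RepSp Z) (δW : RepSp W)
    (f : X → Set Y) (g : Z → Set W) : Prop :=
  ∃ H K : (ℕ → ℕ) →. (ℕ → ℕ), BaireComputable H ∧ BaireComputable K ∧
    ∀ G : (ℕ → ℕ) →. (ℕ → ℕ), Realizes δZ δW g G →
      Realizes δX δY f
        (fun p => (K p).bind fun r => (G r).bind fun q => H (pairB p q))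

/-- Strong Weihrauch reducibility: `f ≤_sW g` iff there are computable `H, K`
such that `H ∘ G ∘ K` realizes `f` whenever `G` realizes `g`. -/
def SWRed {X Y Z W : Type*} (δX : RepSp X) (δY : RepSp Y) (δZ : RepSp Z) (δW : RepSp W)
    (f : X → Set Y) (g : Z → Set W) : Prop :=
  ∃ H K : (ℕ → ℕ) →. (ℕ → ℕ), BaireComputable H ∧ BaireComputable K ∧
    ∀ G : (ℕ → ℕ) →. (ℕ → ℕ), Realizes δZ δW g G →
      Realizes δX δY f (fun p => (K p).bind fun r => (G r).bind fun q => H q)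

/-- Weihrauch equivalence. -/
def WEquiv {X Y Z W : Type*} (δX : RepSp X) (δY : RepSp Y) (δZ : RepSp Z) (δW : RepSp W)
    (f : X → Set Y) (g : Z → Set W) : Prop :=
  WRed δX δY δZ δW f g ∧ WRed δZ δW δX δY g f

/-- Strong Weihrauch equivalence. -/
def SWEquiv {X Y Z W : Type*} (δX : RepSp X) (δY : RepSp Y) (δZ : RepSp Z) (δW : RepSp W)
    (f : X → Set Y) (g : Z → Set W) : Prop :=
  SWRed δX δY δZ δW f g ∧ SWRed δZ δW δX δY g f

/-- The identity problem on Baire space. -/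
def idProblem : (ℕ → ℕ) → Set (ℕ → ℕ) := fun p => {p}

/-! ## Constructions on representations and problems -/

/-- Representation of the product of two represented spaces. -/
def prodRep {X Z : Type*} (δX : RepSp X) (δZ : RepSp Z) : RepSp (X × Z) where
  δ := fun r => (δX.δ (evenPart r)).bind fun x => (δZ.δ (oddPart r)).map fun z => (x, z)
  surj := by
    intro xz
    obtain ⟨p, hp⟩ := δX.surj xz.1
    obtain ⟨q, hq⟩ := δZ.surj xz.2
    have he : evenPart (pairB p q) = p := by
      funext n
      have h1 : (2 * n) % 2 = 0 := by omega
      have h2 : (2 * n) / 2 = n := by omega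
      simp [evenPart, pairB, h1, h2]
    have ho : oddPart (pairB p q) = q := by
      funext n
      have h1 : ¬((2 * n + 1) % 2 = 0) := by omega
      have h2 : (2 * n + 1) / 2 = n := by omega
      simp [oddPart, pairB, h1, h2]
    refine ⟨pairB p q, Part.mem_bind_iff.mpr ⟨xz.1, by rw [he]; exact hp,
      (Part.mem_map_iff _).mpr ⟨xz.2, by rw [ho]; exact hq, rfl⟩⟩⟩

/-- The product `f × g` of two problems. -/
def prodProblem {X Y Z W : Type*} (f : X → Set Y) (g : Z → Set W) :
    X × Z → Set (Y × W) :=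
  fun xz => f xz.1 ×ˢ g xz.2

/-- Representation of the disjoint union of two represented spaces. -/
def sumRep {X Z : Type*} (δX : RepSp X) (δZ : RepSp Z) : RepSp (X ⊕ Z) where
  δ := fun r =>
    if r 0 = 0 then (δX.δ fun n => r (n + 1)).map Sum.inl
    else if r 0 = 1 then (δZ.δ fun n => r (n + 1)).map Sum.inr
    else Part.none
  surj := by
    rintro (x | z)
    · obtain ⟨p, hp⟩ := δX.surj x
      refine ⟨fun n => Nat.casesOn n 0 p, ?_⟩
      show Sum.inl x ∈ (δX.δ p).map Sum.inl
      exact (Part.mem_map_iff _).mpr ⟨x, hp, rfl⟩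
    · obtain ⟨p, hp⟩ := δZ.surj z
      refine ⟨fun n => Nat.casesOn n 1 p, ?_⟩
      show Sum.inr z ∈ (δZ.δ p).map Sum.inr
      exact (Part.mem_map_iff _).mpr ⟨z, hp, rfl⟩

/-- The coproduct `f ⊔ g` of two problems. -/
def coprodProblem {X Y Z W : Type*} (f : X → Set Y) (g : Z → Set W) :
    X ⊕ Z → Set (Y ⊕ W)
  | Sum.inl x => Sum.inl '' f x
  | Sum.inr z => Sum.inr '' g z

/-- The meet `f ⊓ g` of two problems. -/
def meetProblem {X Y Z W : Type*} (f : X → Set Y) (g : Z → Set W) :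
    X × Z → Set (Y ⊕ W) :=
  fun xz => Sum.inl '' f xz.1 ∪ Sum.inr '' g xz.2

/-- Representation of the space of sequences `X^ℕ` via the countable tupling. -/
noncomputable def seqRep {X : Type*} (δX : RepSp X) : RepSp (ℕ → X) where
  δ := fun r => Part.mk (∀ i : ℕ, ∃ x, x ∈ δX.δ (proj r i))
    (fun h i => Classical.choose (h i))
  surj := by
    intro x
    choose p hp using fun i => δX.surj (x i)
    refine ⟨fun m => p (Nat.unpair m).1 (Nat.unpair m).2, ?_⟩
    have hproj : ∀ i, proj (fun m => p (Nat.unpair m).1 (Nat.unpair m).2) i = p i := by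
      intro i; funext k; simp [proj]
    have hdom : ∀ i : ℕ, ∃ y, y ∈ δX.δ (proj (fun m => p (Nat.unpair m).1 (Nat.unpair m).2) i) :=
      fun i => ⟨x i, by rw [hproj i]; exact hp i⟩
    refine mem_part_mk hdom ?_
    funext i
    exact Part.mem_unique (Classical.choose_spec (hdom i)) (by rw [hproj i]; exact hp i)

/-- The parallelization `f̂` of a problem. -/
def parallelProblem {X Y : Type*} (f : X → Set Y) : (ℕ → X) → Set (ℕ → Y) :=
  fun x => {y | ∀ i, y i ∈ f (x i)}

/-- Representation of the finite power `Xⁿ` via the countable tupling. -/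
noncomputable def finProdRep (n : ℕ) {X : Type*} (δX : RepSp X) : RepSp (Fin n → X) where
  δ := fun r => Part.mk (∀ i : Fin n, ∃ x, x ∈ δX.δ (proj r i))
    (fun h i => Classical.choose (h i))
  surj := by
    intro x
    choose p hp using fun i => δX.surj (x i)
    classical
    refine ⟨fun m => if h : (Nat.unpair m).1 < n then p ⟨_, h⟩ (Nat.unpair m).2 else 0, ?_⟩
    have hproj : ∀ i : Fin n,
        proj (fun m => if h : (Nat.unpair m).1 < n then p ⟨_, h⟩ (Nat.unpair m).2 else 0) i
          = p i := by
      intro i; funext k; simp [proj, i.isLt]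
    have hdom : ∀ i : Fin n, ∃ y, y ∈ δX.δ
        (proj (fun m => if h : (Nat.unpair m).1 < n then p ⟨_, h⟩ (Nat.unpair m).2 else 0) i) :=
      fun i => ⟨x i, by rw [hproj i]; exact hp i⟩
    refine mem_part_mk hdom ?_
    funext i
    exact Part.mem_unique (Classical.choose_spec (hdom i)) (by rw [hproj i]; exact hp i)

/-- The `n`-fold product `fⁿ` of a problem with itself. -/
def finProdProblem (n : ℕ) {X Y : Type*} (f : X → Set Y) :
    (Fin n → X) → Set (Fin n → Y) :=
  fun x => {y | ∀ i, y i ∈ f (x i)}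

/-- Representation of the space `X*` of words over `X`. -/
noncomputable def starRep {X : Type*} (δX : RepSp X) : RepSp (Σ n : ℕ, Fin n → X) where
  δ := fun r => Part.mk (∀ i : Fin (r 0), ∃ x, x ∈ δX.δ (proj (fun m => r (m + 1)) i))
    (fun h => ⟨r 0, fun i => Classical.choose (h i)⟩)
  surj := by
    rintro ⟨n, x⟩
    choose p hp using fun i => δX.surj (x i)
    classical
    have hproj : ∀ i : Fin n,
        proj (fun m' => if h : (Nat.unpair m').1 < n then p ⟨_, h⟩ (Nat.unpair m').2 else 0) i
          = p i := by
      intro i; funext k; simp [proj, i.isLt]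
    have hdom : ∀ i : Fin n, ∃ y, y ∈ δX.δ
        (proj (fun m' => if h : (Nat.unpair m').1 < n then p ⟨_, h⟩ (Nat.unpair m').2 else 0) i) :=
      fun i => ⟨x i, by rw [hproj i]; exact hp i⟩
    refine ⟨fun m => Nat.casesOn m n
      (fun m' => if h : (Nat.unpair m').1 < n then p ⟨_, h⟩ (Nat.unpair m').2 else 0),
      Part.mem_mk_iff.mpr ⟨hdom, ?_⟩⟩
    have hx : (fun i : Fin n => Classical.choose (hdom i)) = x := funext fun i =>
      Part.mem_unique (Classical.choose_spec (hdom i)) (by rw [hproj i]; exact hp i)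
    exact congrArg (Sigma.mk n) hx

/-- The finite parallelization `f*` of a problem. -/
def starProblem {X Y : Type*} (f : X → Set Y) :
    (Σ n : ℕ, Fin n → X) → Set (Σ n : ℕ, Fin n → Y) :=
  fun x => {y | ∃ e : x.1 = y.1, ∀ i : Fin x.1, y.2 (Fin.cast e i) ∈ f (x.2 i)}

/-- Representation of a countable disjoint union of represented spaces. -/
def csumRep {Z : ℕ → Type*} (δZ : ∀ i, RepSp (Z i)) : RepSp (Σ i, Z i) where
  δ := fun r => ((δZ (r 0)).δ (fun n => r (n + 1))).map fun z => ⟨r 0, z⟩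
  surj := by
    rintro ⟨i, z⟩
    obtain ⟨p, hp⟩ := (δZ i).surj z
    exact ⟨fun n => Nat.casesOn n i p, (Part.mem_map_iff _).mpr ⟨z, hp, rfl⟩⟩

/-- The countable coproduct `⊔ᵢ gᵢ` of a sequence of problems. -/
def csumProblem {Z W : ℕ → Type*} (g : ∀ i, Z i → Set (W i)) :
    (Σ i, Z i) → Set (Σ i, W i) :=
  fun x => Sigma.mk x.1 '' g x.1 x.2

/-! ## Limits and jumps -/

/-- The limit map on Baire space, as a (single-valued) problem:
`lim⟨p₀,p₁,…⟩` is the pointwise limit of the sequence `(pₙ)ₙ`. -/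
def limProblem : (ℕ → ℕ) → Set (ℕ → ℕ) :=
  fun r => {q | ∀ n, ∃ N, ∀ m, N ≤ m → proj r m n = q n}

/-- The limit map on Baire space as a partial (single-valued) function. -/
noncomputable def limP : (ℕ → ℕ) →. (ℕ → ℕ) :=
  fun r => Part.mk (∀ n, ∃ N, ∀ m, N ≤ m → proj r m n = proj r N n)
    (fun h n => proj r (Classical.choose (h n)) n)

/-- The jump `(X′, δ′)` of a represented space: `δ′ := δ ∘ lim`. -/
noncomputable def jumpRep {X : Type*} (δ : RepSp X) : RepSp X where
  δ := fun p => (limP p).bind δ.δ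
  surj := by
    intro x
    obtain ⟨p, hp⟩ := δ.surj x
    refine ⟨fun m => p (Nat.unpair m).2, Part.mem_bind_iff.mpr ⟨p, ?_, hp⟩⟩
    have hproj : ∀ m, proj (fun m => p (Nat.unpair m).2) m = p := by
      intro m; funext k; simp [proj]
    have hdom : ∀ n, ∃ N, ∀ m, N ≤ m →
        proj (fun m => p (Nat.unpair m).2) m n = proj (fun m => p (Nat.unpair m).2) N n :=
      fun n => ⟨0, fun m _ => by rw [hproj m, hproj 0]⟩
    refine mem_part_mk hdom ?_
    funext n
    rw [hproj]

/-! ## Choice problems -/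

/-- The representation of subsets of `ℕ` by enumerations of their complements:
`p` is a name of `A` iff `p` enumerates (via `p m = n + 1`) exactly the `n ∉ A`. -/
def enumNegRep : RepSp (Set ℕ) where
  δ := fun p => Part.some {n | ∀ m, p m ≠ n + 1}
  surj := by
    intro S
    by_cases h : Sᶜ.Nonempty
    · obtain ⟨f, hf⟩ := (Set.to_countable Sᶜ).exists_eq_range h
      refine ⟨fun m => f m + 1, Part.mem_some_iff.mpr ?_⟩
      ext n
      simp only [Set.mem_setOf_eq]
      constructor
      · intro hn m hm
        have hfm : f m ∈ Sᶜ := by rw [hf]; exact ⟨m, rfl⟩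
        have hfmn : f m = n := by omega
        rw [hfmn] at hfm
        exact hfm hn
      · intro hn
        by_contra hS
        have hmem : n ∈ Sᶜ := hS
        rw [hf] at hmem
        obtain ⟨m, hm⟩ := hmem
        exact hn m (by omega)
    · refine ⟨fun _ => 0, Part.mem_some_iff.mpr ?_⟩
      have hS : S = Set.univ := by
        rw [← compl_compl S, Set.not_nonempty_iff_eq_empty.mp h, Set.compl_empty]
      rw [hS]
      ext n
      simp

/-- Choice on the natural numbers: given (a name of) a nonempty set `A ⊆ ℕ`,
find an element of `A`. -/
def CNat : Set ℕ → Set ℕ := fun A => A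

/-- Choice on the finite set `{0, …, k-1}`. -/
def CFin (k : ℕ) : Set ℕ → Set ℕ := fun A => {n | n ∈ A ∧ A ⊆ Set.Iio k}

/-- The limited principle of omniscience as a problem. -/
noncomputable def LPOProblem : (ℕ → ℕ) → Set ℕ :=
  fun p => {if ∃ k, p k = 0 then 1 else 0}


/-- Restriction of a problem on Baire space to a set `A`. -/
def restrictProblem (F : (ℕ → ℕ) → Set (ℕ → ℕ)) (A : Set (ℕ → ℕ)) :
    (ℕ → ℕ) → Set (ℕ → ℕ) :=
  fun p => {q | q ∈ F p ∧ p ∈ A}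

/-- A problem is a fractal if it has a representative on Baire space all of whose
restrictions to clopen sets meeting its domain are Weihrauch equivalent to it. -/
def Fractal {X Y : Type*} (δX : RepSp X) (δY : RepSp Y) (f : X → Set Y) : Prop :=
  ∃ F : (ℕ → ℕ) → Set (ℕ → ℕ),
    WEquiv repBaire repBaire δX δY F f ∧
    ∀ A : Set (ℕ → ℕ), IsClopen A → (A ∩ {p | (F p).Nonempty}).Nonempty →
      WEquiv repBaire repBaire repBaire repBaire (restrictProblem F A) F

/-- A problem `f` is densely realized if for every name `p` of an admissible instance
the set of names of solutions is dense in the domain of the output representation. -/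
def DenselyRealized {X Y : Type*} (δX : RepSp X) (δY : RepSp Y) (f : X → Set Y) : Prop :=
  ∀ p, ∀ x ∈ δX.δ p, (f x).Nonempty →
    {q : ℕ → ℕ | (δY.δ q).Dom} ⊆ closure {q : ℕ → ℕ | ∃ y ∈ δY.δ q, y ∈ f x}

/-- Turing reducibility on Baire space: `a` is computable from `b`. -/
def TRed (a b : ℕ → ℕ) : Prop := ∃ F, BaireComputable F ∧ a ∈ F b

/-- The two-point space `{p, q}` represented by the identity. -/
def pqRep (p q : ℕ → ℕ) : RepSp {r : ℕ → ℕ // r = p ∨ r = q} where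
  δ := fun r => Part.mk (r = p ∨ r = q) (fun h => ⟨r, h⟩)
  surj := fun x => ⟨x.1, Part.mem_mk_iff.mpr ⟨x.2, rfl⟩⟩

/-- The problem `m_A` associated with a set `A ⊆ ℕ`. -/
noncomputable def mProblem (p q : ℕ → ℕ) (A : Set ℕ) :
    ℕ → Set {r : ℕ → ℕ // r = p ∨ r = q} :=
  fun n => {y | y.1 = if n ∈ A then p else q}

/-- The join `A ⊕ B` of two sets of natural numbers. -/
def mJoin (A B : Set ℕ) : Set ℕ :=
  {k | (k % 2 = 0 ∧ k / 2 ∈ A) ∨ (k % 2 = 1 ∧ k / 2 ∈ B)}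

/-- The cardinality `#f` of a problem: the supremum of the cardinalities of sets
`M ⊆ dom f` whose images under `f` are pairwise disjoint. -/
noncomputable def problemCard {X Y : Type} (f : X → Set Y) : Cardinal :=
  sSup {c | ∃ M : Set X, (∀ x ∈ M, (f x).Nonempty) ∧ M.PairwiseDisjoint f ∧
    c = Cardinal.mk M}

/-- Computability of a problem: it has a computable realizer. -/
def ComputableProblem {X Y : Type*} (δX : RepSp X) (δY : RepSp Y) (f : X → Set Y) : Prop :=
  ∃ F, BaireComputable F ∧ Realizes δX δY f F

/-- The minimum function on Baire space. -/
def minProblem : (ℕ → ℕ) → Set ℕ :=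
  fun p => {n | n ∈ Set.range p ∧ ∀ m, n ≤ p m}

/-- The complementary minimum function `minᶜ`. -/
def mincProblem : (ℕ → ℕ) → Set ℕ :=
  fun p => {n | (∀ m, p m ≠ n) ∧ ∀ j, j < n → ∃ m, p m = j}

/-- The maximum function on Baire space (defined on bounded sequences). -/
def maxProblem : (ℕ → ℕ) → Set ℕ :=
  fun p => {n | n ∈ Set.range p ∧ ∀ m, p m ≤ n}

namespace CnatAux

/-- bounded existential as a Bool -/
def bex (q : ℕ → Bool) : ℕ → Bool
  | 0 => false
  | (n+1) => bex q n || q n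

lemma bex_iff (q : ℕ → Bool) (N : ℕ) : bex q N = true ↔ ∃ s < N, q s = true := by
  induction N with
  | zero => simp [bex]
  | succ n ih =>
    simp only [bex, Bool.or_eq_true, ih]
    constructor
    · rintro (⟨s, hs, h⟩ | h)
      · exact ⟨s, by omega, h⟩
      · exact ⟨n, by omega, h⟩
    · rintro ⟨s, hs, h⟩
      rcases Nat.lt_succ_iff_lt_or_eq.1 hs with h' | rfl
      · exact Or.inl ⟨s, h', h⟩
      · exact Or.inr h

def ball (q : ℕ → Bool) (N : ℕ) : Bool := !(bex (fun s => !(q s)) N)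

lemma ball_iff (q : ℕ → Bool) (N : ℕ) : ball q N = true ↔ ∀ s < N, q s = true := by
  simp only [ball, Bool.not_eq_true', Bool.not_eq_false]
  rw [← Bool.not_eq_true (bex _ N), not_iff_comm, bex_iff]
  simp

theorem primrec_bex {α : Type*} [Primcodable α] {f : α → ℕ} {q : α → ℕ → Bool}
    (hf : Primrec f) (hq : Primrec₂ q) : Primrec fun a => bex (q a) (f a) := by
  have h : Primrec₂ (fun (a : α) (p : ℕ × Bool) => p.2 || q a p.1) :=
    (Primrec.dom_bool₂ (· || ·)).comp₂ (Primrec.snd.comp Primrec.snd).to₂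
      (hq.comp Primrec.fst (Primrec.fst.comp Primrec.snd)).to₂
  have := Primrec.nat_rec' hf (Primrec.const false) h
  refine this.of_eq fun a => ?_
  generalize f a = k
  induction k with
  | zero => rfl
  | succ n ih => simp [bex, ← ih]

theorem primrec_ball {α : Type*} [Primcodable α] {f : α → ℕ} {q : α → ℕ → Bool}
    (hf : Primrec f) (hq : Primrec₂ q) : Primrec fun a => ball (q a) (f a) :=
  Primrec.not.comp (primrec_bex hf (Primrec.not.comp₂ hq))

/-- least `a < N` with `q a = true`, or `N` if there is none. -/
def lst (q : ℕ → Bool) : ℕ → ℕ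
  | 0 => 0
  | (k+1) => if lst q k < k then lst q k else if q k then k else k + 1

lemma lst_spec (q : ℕ → Bool) (N : ℕ) :
    lst q N ≤ N ∧ (∀ b < lst q N, q b = false) ∧ (lst q N < N → q (lst q N) = true) := by
  induction N with
  | zero => simp [lst]
  | succ k ih =>
    obtain ⟨h1, h2, h3⟩ := ih
    by_cases hlt : lst q k < k
    · refine ⟨by simp [lst, hlt]; omega, ?_, ?_⟩ <;> simp only [lst, if_pos hlt]
      · exact h2
      · intro _; exact h3 hlt
    · have hk : lst q k = k := by omega
      by_cases hq : q k = true
      · refine ⟨?_, ?_, ?_⟩ <;> simp only [lst, if_neg hlt, if_pos hq]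
        · omega
        · intro b hb; exact h2 b (by omega)
        · intro _; exact hq
      · refine ⟨?_, ?_, ?_⟩ <;> simp only [lst, if_neg hlt, if_pos hq, if_neg hq]
        · omega
        · intro b hb
          rcases Nat.lt_succ_iff_lt_or_eq.1 hb with h | rfl
          · exact h2 b (by omega)
          · simpa using hq
        · omega

lemma lst_le {q : ℕ → Bool} {N a : ℕ} (ha : q a = true) : lst q N ≤ a := by
  by_contra h
  have := (lst_spec q N).2.1 a (by omega)
  simp [ha] at this

lemma lst_lt {q : ℕ → Bool} {N a : ℕ} (haN : a < N) (ha : q a = true) : lst q N < N :=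
  lt_of_le_of_lt (lst_le ha) haN

theorem primrec_lst {α : Type*} [Primcodable α] {f : α → ℕ} {q : α → ℕ → Bool}
    (hf : Primrec f) (hq : Primrec₂ q) : Primrec fun a => lst (q a) (f a) := by
  have inner : Primrec (fun x : α × (ℕ × ℕ) => if q x.1 x.2.1 then x.2.1 else x.2.1 + 1) :=
    (Primrec.cond (hq.comp Primrec.fst (Primrec.fst.comp Primrec.snd))
      (Primrec.fst.comp Primrec.snd)
      (Primrec.succ.comp (Primrec.fst.comp Primrec.snd))).of_eq fun x => by
        cases hqq : q x.1 x.2.1 <;> simp [hqq]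
  have hc : PrimrecPred (fun x : α × (ℕ × ℕ) => x.2.2 < x.2.1) :=
    Primrec.nat_lt.comp (Primrec.snd.comp Primrec.snd) (Primrec.fst.comp Primrec.snd)
  have h : Primrec₂ (fun (a : α) (p : ℕ × ℕ) =>
      if p.2 < p.1 then p.2 else if q a p.1 then p.1 else p.1 + 1) :=
    (Primrec.ite hc (Primrec.snd.comp Primrec.snd) inner).to₂
  have := Primrec.nat_rec' hf (Primrec.const 0) h
  refine this.of_eq fun a => ?_
  generalize f a = k
  induction k with
  | zero => rfl
  | succ n ih => simp [lst, ← ih]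

lemma pref_length (p : ℕ → ℕ) (m : ℕ) : (pref p m).length = m := by simp [pref]

lemma pref_getD (p : ℕ → ℕ) {i m : ℕ} (h : i < m) : (pref p m).getD i 0 = p i := by
  rw [List.getD_eq_getElem _ _ (by simpa [pref_length] using h)]
  simp [pref]

/-- the stream produced from `p` by the word function `f` -/
def mkStream (f : ℕ → List ℕ → ℕ) (p : ℕ → ℕ) : ℕ → ℕ := fun n => f n (pref p (n + 1))

/-- the finite-word version of `mkStream` -/
def ψs (f : ℕ → List ℕ → ℕ) (u : List ℕ) : List ℕ :=
  (List.range u.length).map fun i => f i ((List.range (i + 1)).map fun j => u.getD j 0)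

lemma range_map_getD (u : List ℕ) {k : ℕ} (hk : k ≤ u.length) :
    ((List.range k).map fun j => u.getD j 0) = u.take k := by
  apply List.ext_getElem
  · simp; omega
  · intro i h1 h2
    simp only [List.getElem_map, List.getElem_range, List.getElem_take]
    rw [List.getD_eq_getElem _ _ (by simp at h1; omega)]

lemma ψs_eq (f : ℕ → List ℕ → ℕ) (u : List ℕ) :
    ψs f u = (List.range u.length).map fun i => f i (u.take (i + 1)) := by
  refine List.map_congr_left fun i hi => ?_
  rw [range_map_getD u (by simp at hi; omega)]

theorem mkStream_baireComputable {f : ℕ → List ℕ → ℕ} (hf : Primrec₂ f) :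
    BaireComputable (fun p => Part.some (mkStream f p)) := by
  refine ⟨ψs f, ?_, ?_, ?_⟩
  · apply Primrec.to_comp
    have hinner : Primrec₂ (fun (u : List ℕ) (i : ℕ) =>
        (List.range (i + 1)).map fun j => u.getD j 0) :=
      (Primrec.list_map (Primrec.list_range.comp (Primrec.succ.comp Primrec.snd))
        (((Primrec.list_getD 0).comp (Primrec.fst.comp Primrec.fst) Primrec.snd).to₂)).to₂
    exact Primrec.list_map (Primrec.list_range.comp Primrec.list_length)
      (hf.comp Primrec.snd hinner).to₂
  · intro u v huv
    rw [ψs_eq, ψs_eq]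
    have hl : u.length ≤ v.length := huv.length_le
    have hu : u = v.take u.length := List.prefix_iff_eq_take.1 huv
    have : (List.range u.length).map (fun i => f i (u.take (i + 1))) =
        ((List.range v.length).map fun i => f i (v.take (i + 1))).take u.length := by
      rw [← List.map_take, List.take_range, Nat.min_eq_left hl]
      refine List.map_congr_left fun i hi => ?_
      simp only [List.mem_range] at hi
      rw [hu, List.take_take, Nat.min_eq_left (by omega)]
    rw [this]
    exact List.take_prefix _ _
  · intro p q hq n
    simp only [Part.mem_some_iff] at hq
    subst hq
    refine ⟨n + 1, ?_⟩
    rw [ψs_eq]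
    have hlen : (pref p (n + 1)).length = n + 1 := pref_length p (n + 1)
    rw [hlen, List.getElem?_map, List.getElem?_range (by omega)]
    simp only [Option.map_some]
    rw [List.take_of_length_le (by omega)]
    rfl

end CnatAux

namespace CnatAux

/-- generic builder for strong Weihrauch reductions via streams -/
theorem swred_builder {X Y Z W : Type*} {δX : RepSp X} {δY : RepSp Y} {δZ : RepSp Z}
    {δW : RepSp W} {fp : X → Set Y} {g : Z → Set W} (fK fH : ℕ → List ℕ → ℕ)
    (hK : Primrec₂ fK) (hH : Primrec₂ fH)
    (main : ∀ p x, x ∈ δX.δ p → (fp x).Nonempty →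
      ∃ z ∈ δZ.δ (mkStream fK p), (g z).Nonempty ∧
        ∀ q w, w ∈ δW.δ q → w ∈ g z → ∃ y ∈ δY.δ (mkStream fH q), y ∈ fp x) :
    SWRed δX δY δZ δW fp g := by
  refine ⟨fun q => Part.some (mkStream fH q), fun p => Part.some (mkStream fK p),
    mkStream_baireComputable hH, mkStream_baireComputable hK, ?_⟩
  intro G hG p x hx hne
  obtain ⟨z, hz, hgz, hrest⟩ := main p x hx hne
  obtain ⟨q, hqG, w, hw, hwg⟩ := hG (mkStream fK p) z hz hgz
  obtain ⟨y, hy, hyf⟩ := hrest q w hw hwg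
  refine ⟨mkStream fH q, ?_, y, hy, hyf⟩
  simp only [Part.mem_bind_iff, Part.mem_some_iff]
  exact ⟨mkStream fK p, rfl, q, hqG, rfl⟩

lemma stage_bound {P : ℕ → ℕ → Prop} :
    ∀ n : ℕ, (∀ j < n, ∃ m, P m j) → ∃ t, ∀ j < n, ∃ s ≤ t, P s j := by
  intro n
  induction n with
  | zero => exact fun _ => ⟨0, fun j hj => absurd hj (by omega)⟩
  | succ k ih =>
    intro h
    obtain ⟨t, ht⟩ := ih fun j hj => h j (by omega)
    obtain ⟨m, hm⟩ := h k (by omega)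
    refine ⟨max t m, fun j hj => ?_⟩
    rcases Nat.lt_succ_iff_lt_or_eq.1 hj with h' | rfl
    · obtain ⟨s, hs, hps⟩ := ht j h'
      exact ⟨s, le_trans hs (le_max_left _ _), hps⟩
    · exact ⟨m, le_max_right _ _, hm⟩

lemma minc_unique {r : ℕ → ℕ} {a b : ℕ} (ha : a ∈ mincProblem r) (hb : b ∈ mincProblem r) :
    a = b := by
  by_contra h
  rcases lt_or_gt_of_ne h with h' | h'
  · obtain ⟨m, hm⟩ := hb.2 a h'
    exact ha.1 m hm
  · obtain ⟨m, hm⟩ := ha.2 b h'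
    exact hb.1 m hm

/-! ### Reduction 1: `CNat ≤ₛw mincProblem` -/

def fK1 : ℕ → List ℕ → ℕ := fun n u =>
  if n % 3 = 0 then 0 else if n % 3 = 1 then 2 * (n / 3) + 1 else 2 * u.getD (n / 3) 0

def fH1 : ℕ → List ℕ → ℕ := fun _ u => u.getD 0 0 / 2 - 1

lemma primrec_fK1 : Primrec₂ fK1 := by
  unfold fK1
  apply Primrec.ite
  · exact Primrec.eq.comp (Primrec.nat_mod.comp Primrec.fst (Primrec.const 3)) (Primrec.const 0)
  · exact Primrec.const 0
  apply Primrec.ite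
  · exact Primrec.eq.comp (Primrec.nat_mod.comp Primrec.fst (Primrec.const 3)) (Primrec.const 1)
  · exact Primrec.succ.comp (Primrec.nat_mul.comp (Primrec.const 2)
      (Primrec.nat_div.comp Primrec.fst (Primrec.const 3)))
  · exact Primrec.nat_mul.comp (Primrec.const 2)
      ((Primrec.list_getD 0).comp Primrec.snd (Primrec.nat_div.comp Primrec.fst (Primrec.const 3)))

lemma primrec_fH1 : Primrec₂ fH1 :=
  (Primrec.nat_sub.comp (Primrec.nat_div.comp
    ((Primrec.list_getD 0).comp Primrec.snd (Primrec.const 0)) (Primrec.const 2))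
    (Primrec.const 1)).to₂

lemma red1 : SWRed enumNegRep repNat repBaire repNat CNat mincProblem := by
  apply swred_builder fK1 fH1 primrec_fK1 primrec_fH1
  intro p A hA hne
  have hAeq : A = {n | ∀ m, p m ≠ n + 1} := Part.mem_some_iff.1 hA
  set r := mkStream fK1 p with hrdef
  have hr : ∀ n, r n = if n % 3 = 0 then 0 else if n % 3 = 1 then 2 * (n / 3) + 1
      else 2 * p (n / 3) := by
    intro n
    simp only [hrdef, mkStream, fK1, pref_getD p (show n / 3 < n + 1 by omega)]
  set μ := sInf A with hμdef
  have hμA : μ ∈ A := Nat.sInf_mem hne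
  have hμmin : ∀ k < μ, k ∉ A := fun k hk => Nat.notMem_of_lt_sInf hk
  have key : (2 * μ + 2) ∈ mincProblem r := by
    constructor
    · intro m
      rw [hr m]
      split_ifs with h1 h2
      · omega
      · omega
      · intro hcon
        have hp : p (m / 3) = μ + 1 := by omega
        exact (hAeq ▸ hμA) (m / 3) hp
    · intro j hj
      by_cases hj0 : j = 0
      · exact ⟨0, by rw [hr 0]; simp [hj0]⟩
      by_cases hpar : j % 2 = 1
      · refine ⟨3 * (j / 2) + 1, ?_⟩
        rw [hr]
        have h1 : (3 * (j / 2) + 1) % 3 = 1 := by omega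
        have h2 : (3 * (j / 2) + 1) / 3 = j / 2 := by omega
        rw [if_neg (by omega), if_pos h1, h2]
        omega
      · -- j even, j ≥ 2 : j = 2*(k+1) with k < μ
        set k := j / 2 - 1 with hk
        have hjk : j = 2 * k + 2 := by omega
        have hkμ : k < μ := by omega
        have hknA : k ∉ A := hμmin k hkμ
        rw [hAeq] at hknA
        simp only [Set.mem_setOf_eq, not_forall, not_not] at hknA
        obtain ⟨m0, hm0⟩ := hknA
        refine ⟨3 * m0 + 2, ?_⟩
        rw [hr]
        have h1 : (3 * m0 + 2) % 3 = 2 := by omega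
        have h2 : (3 * m0 + 2) / 3 = m0 := by omega
        rw [if_neg (by omega), if_neg (by omega), h2, hm0]
        omega
  refine ⟨r, Part.mem_some r, ⟨_, key⟩, ?_⟩
  intro q w hw hwg
  have hwq : w = q 0 := Part.mem_some_iff.1 hw
  have hwval : w = 2 * μ + 2 := minc_unique hwg key
  refine ⟨mkStream fH1 q 0, Part.mem_some _, ?_⟩
  have : mkStream fH1 q 0 = q 0 / 2 - 1 := by
    simp only [mkStream, fH1, pref_getD q (show 0 < 0 + 1 by omega)]
  rw [this]
  have : q 0 / 2 - 1 = μ := by omega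
  rw [this]
  exact hμA

end CnatAux


namespace CnatAux

/-! ### Reduction 2: `mincProblem ≤ₛw CNat` -/

def fK2 : ℕ → List ℕ → ℕ := fun n u =>
  cond ((bex (fun s => u.getD s 0 == n.unpair.1.unpair.1) (n.unpair.2 + 1)) ||
        (bex (fun j => ball (fun s => !(u.getD s 0 == j)) (n.unpair.1.unpair.2 + 1))
          n.unpair.1.unpair.1))
    (n.unpair.1 + 1) 0

def fH2 : ℕ → List ℕ → ℕ := fun _ u => (u.getD 0 0).unpair.1

lemma primrec_fH2 : Primrec₂ fH2 :=
  ((Primrec.fst.comp Primrec.unpair).comp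
    ((Primrec.list_getD 0).comp Primrec.snd (Primrec.const 0))).to₂

section
open Primrec

lemma primrec_fK2 : Primrec₂ fK2 := by
  unfold fK2
  have hu : Primrec fun x : ℕ × List ℕ => x.2 := snd
  have hm : Primrec fun x : ℕ × List ℕ => x.1.unpair.1.unpair.1 :=
    (fst.comp unpair).comp ((fst.comp unpair).comp fst)
  have ht : Primrec fun x : ℕ × List ℕ => x.1.unpair.1.unpair.2 :=
    (snd.comp unpair).comp ((fst.comp unpair).comp fst)
  have huu : Primrec fun x : ℕ × List ℕ => x.1.unpair.2 := (snd.comp unpair).comp fst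
  have hb1 : Primrec fun x : ℕ × List ℕ =>
      bex (fun s => x.2.getD s 0 == x.1.unpair.1.unpair.1) (x.1.unpair.2 + 1) := by
    apply primrec_bex (succ.comp huu)
    exact (Primrec.beq.comp ((list_getD 0).comp (hu.comp fst) snd) (hm.comp fst)).to₂
  have hb2 : Primrec fun x : ℕ × List ℕ =>
      bex (fun j => ball (fun s => !(x.2.getD s 0 == j)) (x.1.unpair.1.unpair.2 + 1))
        x.1.unpair.1.unpair.1 := by
    apply primrec_bex hm
    exact (primrec_ball (succ.comp (ht.comp fst))
      ((Primrec.not.comp (Primrec.beq.comp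
        ((list_getD 0).comp ((hu.comp fst).comp fst) snd) (snd.comp fst))).to₂)).to₂
  exact (Primrec.cond ((Primrec.dom_bool₂ (· || ·)).comp hb1 hb2)
    (succ.comp ((fst.comp unpair).comp fst)) (const 0)).to₂

end

/-- the condition for enumeration in reduction 2 -/
def C2 (p : ℕ → ℕ) (k uu : ℕ) : Prop :=
  (∃ s ≤ uu, p s = k.unpair.1) ∨ (∃ j < k.unpair.1, ∀ s ≤ k.unpair.2, p s ≠ j)

lemma hr2 (p : ℕ → ℕ) (n : ℕ) :
    mkStream fK2 p n = if C2 p n.unpair.1 n.unpair.2 then n.unpair.1 + 1 else 0 := by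
  have hgd : ∀ s ≤ n, (pref p (n + 1)).getD s 0 = p s := fun s hs =>
    pref_getD p (by omega)
  have e1 : (bex (fun s => (pref p (n + 1)).getD s 0 == n.unpair.1.unpair.1)
      (n.unpair.2 + 1)) = true ↔ ∃ s ≤ n.unpair.2, p s = n.unpair.1.unpair.1 := by
    rw [bex_iff]
    constructor
    · rintro ⟨s, hs, h⟩
      have hsn : s ≤ n := le_trans (by omega) (Nat.unpair_right_le n)
      rw [hgd s hsn] at h
      exact ⟨s, by omega, by simpa using h⟩
    · rintro ⟨s, hs, h⟩
      have hsn : s ≤ n := le_trans hs (Nat.unpair_right_le n)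
      exact ⟨s, by omega, by rw [hgd s hsn]; simpa using h⟩
  have e2 : (bex (fun j => ball (fun s => !((pref p (n + 1)).getD s 0 == j))
      (n.unpair.1.unpair.2 + 1)) n.unpair.1.unpair.1) = true ↔
      ∃ j < n.unpair.1.unpair.1, ∀ s ≤ n.unpair.1.unpair.2, p s ≠ j := by
    have htn : n.unpair.1.unpair.2 ≤ n :=
      le_trans (Nat.unpair_right_le _) (Nat.unpair_left_le n)
    rw [bex_iff]
    constructor
    · rintro ⟨j, hj, h⟩
      rw [ball_iff] at h
      refine ⟨j, hj, fun s hs => ?_⟩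
      have := h s (by omega)
      rw [hgd s (le_trans hs htn)] at this
      simpa using this
    · rintro ⟨j, hj, h⟩
      refine ⟨j, hj, ?_⟩
      rw [ball_iff]
      intro s hs
      rw [hgd s (le_trans (by omega) htn)]
      simpa using h s (by omega)
  simp only [mkStream, fK2]
  by_cases hC : C2 p n.unpair.1 n.unpair.2
  · rw [if_pos hC]
    rcases hC with h | h
    · rw [e1.2 h, Bool.true_or]; rfl
    · rw [e2.2 h, Bool.or_true]; rfl
  · rw [if_neg hC]
    rw [C2, not_or] at hC
    have h1 : (bex (fun s => (pref p (n + 1)).getD s 0 == n.unpair.1.unpair.1)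
        (n.unpair.2 + 1)) = false := Bool.eq_false_iff.mpr fun hb => hC.1 (e1.1 hb)
    have h2 : (bex (fun j => ball (fun s => !((pref p (n + 1)).getD s 0 == j))
        (n.unpair.1.unpair.2 + 1)) n.unpair.1.unpair.1) = false :=
      Bool.eq_false_iff.mpr fun hb => hC.2 (e2.1 hb)
    rw [h1, h2]
    rfl

lemma Aname2 (p : ℕ → ℕ) (a : ℕ) :
    (∀ m, mkStream fK2 p m ≠ a + 1) ↔
      (∀ s, p s ≠ a.unpair.1) ∧ (∀ j < a.unpair.1, ∃ s ≤ a.unpair.2, p s = j) := by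
  constructor
  · intro h
    constructor
    · intro s hps
      have hC : C2 p a s := Or.inl ⟨s, le_refl s, hps⟩
      have := h (Nat.pair a s)
      rw [hr2, Nat.unpair_pair] at this
      exact this (if_pos hC)
    · intro j hj
      by_contra hcon
      push_neg at hcon
      have hC : C2 p a 0 := Or.inr ⟨j, hj, fun s hs => hcon s hs⟩
      have := h (Nat.pair a 0)
      rw [hr2, Nat.unpair_pair] at this
      exact this (if_pos hC)
  · rintro ⟨h1, h2⟩ m hm
    rw [hr2] at hm
    by_cases hC : C2 p m.unpair.1 m.unpair.2
    · rw [if_pos hC] at hm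
      have hma : m.unpair.1 = a := by omega
      rw [hma] at hC
      rcases hC with ⟨s, _, hps⟩ | ⟨j, hj, hall⟩
      · exact h1 s hps
      · obtain ⟨s, hs, hps⟩ := h2 j hj
        exact hall s hs hps
    · rw [if_neg hC] at hm
      omega

lemma red2 : SWRed repBaire repNat enumNegRep repNat mincProblem CNat := by
  apply swred_builder fK2 fH2 primrec_fK2 primrec_fH2
  intro p x hx hne
  have hxp : x = p := Part.mem_some_iff.1 hx
  subst hxp
  obtain ⟨n₀, hn₀⟩ := hne
  obtain ⟨t, ht⟩ := stage_bound n₀ hn₀.2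
  set r := mkStream fK2 x with hrdef
  refine ⟨{a | ∀ m, r m ≠ a + 1}, Part.mem_some _, ⟨Nat.pair n₀ t, ?_⟩, ?_⟩
  · show ∀ m, r m ≠ Nat.pair n₀ t + 1
    rw [hrdef]
    rw [show (∀ m, mkStream fK2 x m ≠ Nat.pair n₀ t + 1) ↔ _ from Aname2 x (Nat.pair n₀ t),
      Nat.unpair_pair]
    exact ⟨hn₀.1, ht⟩
  · intro q w hw hwg
    have hwq : w = q 0 := Part.mem_some_iff.1 hw
    have hwA : ∀ m, r m ≠ w + 1 := hwg
    rw [hrdef] at hwA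
    rw [show (∀ m, mkStream fK2 x m ≠ w + 1) ↔ _ from Aname2 x w] at hwA
    refine ⟨mkStream fH2 q 0, Part.mem_some _, ?_⟩
    have hval : mkStream fH2 q 0 = (q 0).unpair.1 := by
      simp only [mkStream, fH2, pref_getD q (show 0 < 0 + 1 by omega)]
    rw [hval, ← hwq]
    exact ⟨hwA.1, fun j hj => (hwA.2 j hj).imp fun s hs => hs.2⟩

end CnatAux


namespace CnatAux

lemma bex_congr {q q' : ℕ → Bool} : ∀ {N : ℕ}, (∀ s < N, q s = q' s) → bex q N = bex q' N := by
  intro N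
  induction N with
  | zero => intro _; rfl
  | succ k ih =>
    intro h
    simp only [bex, ih fun s hs => h s (by omega), h k (by omega)]

lemma ball_congr {q q' : ℕ → Bool} {N : ℕ} (h : ∀ s < N, q s = q' s) : ball q N = ball q' N := by
  unfold ball
  congr 1
  exact bex_congr fun s hs => by rw [h s hs]

lemma lst_congr {q q' : ℕ → Bool} : ∀ {N : ℕ}, (∀ a < N, q a = q' a) → lst q N = lst q' N := by
  intro N
  induction N with
  | zero => intro _; rfl
  | succ k ih =>
    intro h
    simp only [lst, ih fun a ha => h a (by omega), h k (by omega)]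

/-! ### Reduction 3: `CNat ≤ₛw maxProblem` -/

def fK3 : ℕ → List ℕ → ℕ := fun n u =>
  lst (fun a => ball (fun m => !(u.getD m 0 == a + 1)) (n + 1)) (n + 2)

def fH3 : ℕ → List ℕ → ℕ := fun _ u => u.getD 0 0

section
open Primrec

lemma primrec_fK3 : Primrec₂ fK3 := by
  unfold fK3
  have h : Primrec fun x : ℕ × List ℕ =>
      lst (fun a => ball (fun m => !(x.2.getD m 0 == a + 1)) (x.1 + 1)) (x.1 + 2) := by
    apply primrec_lst (succ.comp (succ.comp fst))
    exact (primrec_ball (succ.comp (fst.comp fst))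
      ((Primrec.not.comp (Primrec.beq.comp
        ((list_getD 0).comp ((snd.comp fst).comp fst) snd)
        (succ.comp (snd.comp fst)))).to₂)).to₂
  exact h.to₂

lemma primrec_fH3 : Primrec₂ fH3 :=
  ((Primrec.list_getD 0).comp Primrec.snd (Primrec.const 0)).to₂

end

/-- the approximation predicate for reduction 3 -/
def Q3 (p : ℕ → ℕ) (n a : ℕ) : Bool := ball (fun m => !(p m == a + 1)) (n + 1)

lemma hQ3 (p : ℕ → ℕ) (n a : ℕ) : Q3 p n a = true ↔ ∀ m ≤ n, p m ≠ a + 1 := by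
  rw [Q3, ball_iff]
  constructor
  · intro h m hm
    have := h m (by omega)
    simpa using this
  · intro h m hm
    simpa using h m (by omega)

lemma hr3 (p : ℕ → ℕ) (n : ℕ) : mkStream fK3 p n = lst (Q3 p n) (n + 2) := by
  simp only [mkStream, fK3]
  apply lst_congr
  intro a _
  apply ball_congr
  intro m hm
  rw [pref_getD p (show m < n + 1 by omega)]

lemma red3 : SWRed enumNegRep repNat repBaire repNat CNat maxProblem := by
  apply swred_builder fK3 fH3 primrec_fK3 primrec_fH3
  intro p A hA hne
  have hAeq : A = {n | ∀ m, p m ≠ n + 1} := Part.mem_some_iff.1 hA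
  set r := mkStream fK3 p with hrdef
  set μ := sInf A with hμdef
  have hμA : μ ∈ A := Nat.sInf_mem hne
  have hμp : ∀ m, p m ≠ μ + 1 := by
    have := hμA
    rw [hAeq] at this
    exact this
  have hμmin : ∀ k < μ, k ∉ A := fun k hk => Nat.notMem_of_lt_sInf hk
  have hub : ∀ n, r n ≤ μ := by
    intro n
    rw [hrdef, hr3]
    exact lst_le ((hQ3 p n μ).2 fun m _ => hμp m)
  obtain ⟨t, ht⟩ : ∃ t, ∀ j < μ, ∃ s ≤ t, p s = j + 1 := by
    apply stage_bound
    intro j hj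
    have : j ∉ A := hμmin j hj
    rw [hAeq] at this
    simp only [Set.mem_setOf_eq, not_forall, not_not] at this
    exact this
  set N := max t μ with hNdef
  have hrN : r N = μ := by
    rw [hrdef, hr3]
    refine le_antisymm (lst_le ((hQ3 p N μ).2 fun m _ => hμp m)) ?_
    by_contra hcon
    push_neg at hcon
    have hlt : lst (Q3 p N) (N + 2) < N + 2 := by
      have : μ ≤ N := le_max_right _ _
      omega
    have hQtrue := (lst_spec (Q3 p N) (N + 2)).2.2 hlt
    rw [hQ3] at hQtrue
    obtain ⟨s, hs, hps⟩ := ht _ hcon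
    exact hQtrue s (le_trans hs (le_max_left _ _)) hps
  have key : μ ∈ maxProblem r := ⟨⟨N, hrN⟩, hub⟩
  refine ⟨r, Part.mem_some r, ⟨μ, key⟩, ?_⟩
  intro q w hw hwg
  have hwq : w = q 0 := Part.mem_some_iff.1 hw
  have hwμ : w = μ := by
    obtain ⟨⟨n, hn⟩, hwub⟩ := hwg
    exact le_antisymm (hn ▸ hub n) (hrN ▸ hwub N)
  refine ⟨mkStream fH3 q 0, Part.mem_some _, ?_⟩
  have : mkStream fH3 q 0 = q 0 := by
    simp only [mkStream, fH3, pref_getD q (show 0 < 0 + 1 by omega)]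
  rw [this, ← hwq, hwμ]
  exact hμA

/-! ### Reduction 4: `maxProblem ≤ₛw CNat` -/

def fK4 : ℕ → List ℕ → ℕ := fun n u =>
  cond ((bex (fun m => decide (n.unpair.1.unpair.1 < u.getD m 0)) (n.unpair.2 + 1)) ||
        (ball (fun s => !(u.getD s 0 == n.unpair.1.unpair.1)) (n.unpair.1.unpair.2 + 1)))
    (n.unpair.1 + 1) 0

def fH4 : ℕ → List ℕ → ℕ := fH2

section
open Primrec

lemma primrec_fK4 : Primrec₂ fK4 := by
  unfold fK4
  have hu : Primrec fun x : ℕ × List ℕ => x.2 := snd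
  have hb : Primrec fun x : ℕ × List ℕ => x.1.unpair.1.unpair.1 :=
    (fst.comp unpair).comp ((fst.comp unpair).comp fst)
  have ht : Primrec fun x : ℕ × List ℕ => x.1.unpair.1.unpair.2 :=
    (snd.comp unpair).comp ((fst.comp unpair).comp fst)
  have huu : Primrec fun x : ℕ × List ℕ => x.1.unpair.2 := (snd.comp unpair).comp fst
  have hb1 : Primrec fun x : ℕ × List ℕ =>
      bex (fun m => decide (x.1.unpair.1.unpair.1 < x.2.getD m 0)) (x.1.unpair.2 + 1) := by
    apply primrec_bex (succ.comp huu)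
    exact (Primrec.nat_lt.comp (hb.comp fst)
      ((list_getD 0).comp (hu.comp fst) snd)).decide.to₂
  have hb2 : Primrec fun x : ℕ × List ℕ =>
      ball (fun s => !(x.2.getD s 0 == x.1.unpair.1.unpair.1)) (x.1.unpair.1.unpair.2 + 1) := by
    apply primrec_ball (succ.comp ht)
    exact (Primrec.not.comp (Primrec.beq.comp
      ((list_getD 0).comp (hu.comp fst) snd) (hb.comp fst))).to₂
  exact (Primrec.cond ((Primrec.dom_bool₂ (· || ·)).comp hb1 hb2)
    (succ.comp ((fst.comp unpair).comp fst)) (const 0)).to₂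

end

/-- the condition for enumeration in reduction 4 -/
def C4 (p : ℕ → ℕ) (k uu : ℕ) : Prop :=
  (∃ m ≤ uu, k.unpair.1 < p m) ∨ (∀ s ≤ k.unpair.2, p s ≠ k.unpair.1)

lemma hr4 (p : ℕ → ℕ) (n : ℕ) :
    mkStream fK4 p n = if C4 p n.unpair.1 n.unpair.2 then n.unpair.1 + 1 else 0 := by
  have hgd : ∀ s ≤ n, (pref p (n + 1)).getD s 0 = p s := fun s hs =>
    pref_getD p (by omega)
  have htn : n.unpair.1.unpair.2 ≤ n :=
    le_trans (Nat.unpair_right_le _) (Nat.unpair_left_le n)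
  have e1 : (bex (fun m => decide (n.unpair.1.unpair.1 < (pref p (n + 1)).getD m 0))
      (n.unpair.2 + 1)) = true ↔ ∃ m ≤ n.unpair.2, n.unpair.1.unpair.1 < p m := by
    rw [bex_iff]
    constructor
    · rintro ⟨m, hm, h⟩
      have hmn : m ≤ n := le_trans (by omega) (Nat.unpair_right_le n)
      rw [hgd m hmn] at h
      exact ⟨m, by omega, by simpa using h⟩
    · rintro ⟨m, hm, h⟩
      have hmn : m ≤ n := le_trans hm (Nat.unpair_right_le n)
      exact ⟨m, by omega, by rw [hgd m hmn]; simpa using h⟩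
  have e2 : (ball (fun s => !((pref p (n + 1)).getD s 0 == n.unpair.1.unpair.1))
      (n.unpair.1.unpair.2 + 1)) = true ↔ ∀ s ≤ n.unpair.1.unpair.2, p s ≠ n.unpair.1.unpair.1 := by
    rw [ball_iff]
    constructor
    · intro h s hs
      have := h s (by omega)
      rw [hgd s (le_trans hs htn)] at this
      simpa using this
    · intro h s hs
      rw [hgd s (le_trans (by omega) htn)]
      simpa using h s (by omega)
  simp only [mkStream, fK4]
  by_cases hC : C4 p n.unpair.1 n.unpair.2
  · rw [if_pos hC]
    rcases hC with h | h
    · rw [e1.2 h, Bool.true_or]; rfl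
    · rw [e2.2 h, Bool.or_true]; rfl
  · rw [if_neg hC]
    rw [C4, not_or] at hC
    have h1 : (bex (fun m => decide (n.unpair.1.unpair.1 < (pref p (n + 1)).getD m 0))
        (n.unpair.2 + 1)) = false := Bool.eq_false_iff.mpr fun hb => hC.1 (e1.1 hb)
    have h2 : (ball (fun s => !((pref p (n + 1)).getD s 0 == n.unpair.1.unpair.1))
        (n.unpair.1.unpair.2 + 1)) = false := Bool.eq_false_iff.mpr fun hb => hC.2 (e2.1 hb)
    rw [h1, h2]
    rfl

lemma Aname4 (p : ℕ → ℕ) (a : ℕ) :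
    (∀ m, mkStream fK4 p m ≠ a + 1) ↔
      (∀ m, p m ≤ a.unpair.1) ∧ (∃ s ≤ a.unpair.2, p s = a.unpair.1) := by
  constructor
  · intro h
    constructor
    · intro m
      by_contra hcon
      push_neg at hcon
      have hC : C4 p a m := Or.inl ⟨m, le_refl m, hcon⟩
      have := h (Nat.pair a m)
      rw [hr4, Nat.unpair_pair] at this
      exact this (if_pos hC)
    · by_contra hcon
      push_neg at hcon
      have hC : C4 p a 0 := Or.inr fun s hs => hcon s hs
      have := h (Nat.pair a 0)
      rw [hr4, Nat.unpair_pair] at this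
      exact this (if_pos hC)
  · rintro ⟨h1, h2⟩ m hm
    rw [hr4] at hm
    by_cases hC : C4 p m.unpair.1 m.unpair.2
    · rw [if_pos hC] at hm
      have hma : m.unpair.1 = a := by omega
      rw [hma] at hC
      rcases hC with ⟨mm, _, hlt⟩ | hall
      · exact absurd (h1 mm) (by omega)
      · obtain ⟨s, hs, hps⟩ := h2
        exact hall s hs hps
    · rw [if_neg hC] at hm
      omega

lemma red4 : SWRed repBaire repNat enumNegRep repNat maxProblem CNat := by
  apply swred_builder fK4 fH4 primrec_fK4 primrec_fH2
  intro p x hx hne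
  have hxp : x = p := Part.mem_some_iff.1 hx
  subst hxp
  obtain ⟨b₀, hb₀⟩ := hne
  obtain ⟨⟨s₀, hs₀⟩, hub⟩ := hb₀
  set r := mkStream fK4 x with hrdef
  refine ⟨{a | ∀ m, r m ≠ a + 1}, Part.mem_some _, ⟨Nat.pair b₀ s₀, ?_⟩, ?_⟩
  · show ∀ m, r m ≠ Nat.pair b₀ s₀ + 1
    rw [hrdef]
    rw [show (∀ m, mkStream fK4 x m ≠ Nat.pair b₀ s₀ + 1) ↔ _ from Aname4 x (Nat.pair b₀ s₀),
      Nat.unpair_pair]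
    exact ⟨hub, s₀, le_refl s₀, hs₀⟩
  · intro q w hw hwg
    have hwq : w = q 0 := Part.mem_some_iff.1 hw
    have hwA : ∀ m, r m ≠ w + 1 := hwg
    rw [hrdef] at hwA
    rw [show (∀ m, mkStream fK4 x m ≠ w + 1) ↔ _ from Aname4 x w] at hwA
    refine ⟨mkStream fH4 q 0, Part.mem_some _, ?_⟩
    have hval : mkStream fH4 q 0 = (q 0).unpair.1 := by
      simp only [mkStream, fH4, fH2, pref_getD q (show 0 < 0 + 1 by omega)]
    rw [hval, ← hwq]
    obtain ⟨s, _, hps⟩ := hwA.2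
    exact ⟨⟨s, hps⟩, hwA.1⟩

end CnatAux


/-- `C_ℕ ≡_sW minᶜ ≡_sW max`. -/
theorem cnat_minc_max :
    SWEquiv enumNegRep repNat repBaire repNat CNat mincProblem ∧
    SWEquiv enumNegRep repNat repBaire repNat CNat maxProblem := by
  exact ⟨⟨CnatAux.red1, CnatAux.red2⟩, ⟨CnatAux.red3, CnatAux.red4⟩⟩
end

section
/- C_{n+1} ≤_sW C₂ⁿ for all n ∈ ℕ: choice on a finite set with n+1 elements strongly Weihrauch reduces to the n-fold product of binary choice. -/
open scoped Classical

namespace CfinSW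


lemma foldr_or_eq_any (f : ℕ → Bool) (L : List ℕ) :
    L.foldr (fun s b => (f s || b)) false = L.any f := by
  induction L with
  | nil => simp
  | cons a L ih => simp [List.any_cons, ih]

lemma foldr_and_eq_all (f : ℕ → Bool) (L : List ℕ) :
    L.foldr (fun s b => (f s && b)) true = L.all f := by
  induction L with
  | nil => simp
  | cons a L ih => simp [List.all_cons, ih]

def pB (u : List ℕ) (t i : ℕ) : Bool :=
  (List.range t).foldr (fun s b => ((u.getD s 0 == i + 1) || b)) false

def qB (n : ℕ) (u : List ℕ) (t i : ℕ) : Bool :=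
  (List.range (n + 1)).foldr (fun l b => ((decide (l ≤ i) || pB u t l) && b)) true

lemma pB_iff (u : List ℕ) (t i : ℕ) :
    pB u t i = true ↔ ∃ s < t, u.getD s 0 = i + 1 := by
  rw [pB, foldr_or_eq_any, List.any_eq_true]
  simp [List.mem_range]

lemma qB_iff (n : ℕ) (u : List ℕ) (t i : ℕ) :
    qB n u t i = true ↔ ∀ l ≤ n, i < l → pB u t l = true := by
  rw [qB, foldr_and_eq_all, List.all_eq_true]
  constructor
  · intro h l hl hil
    have := h l (List.mem_range.mpr (by omega))
    rcases Bool.or_eq_true_iff.mp this with h1 | h2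
    · exact absurd (of_decide_eq_true h1) (by omega)
    · exact h2
  · intro h l hl
    rcases le_or_gt l i with h1 | h2
    · simp [h1]
    · simp [h l (by have := List.mem_range.mp hl; omega) h2]

lemma getD_congr_of_prefix {u v : List ℕ} (h : u <+: v) {s : ℕ} (hs : s < u.length) :
    u.getD s 0 = v.getD s 0 := by
  obtain ⟨w, rfl⟩ := h
  rw [List.getD_eq_getElem?_getD, List.getD_eq_getElem?_getD, List.getElem?_append_left hs]

lemma pB_congr {u v : List ℕ} (h : u <+: v) {t : ℕ} (ht : t ≤ u.length) (i : ℕ) :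
    pB u t i = pB v t i := by
  have : ∀ s < t, u.getD s 0 = v.getD s 0 := fun s hs =>
    getD_congr_of_prefix h (by omega)
  rw [Bool.eq_iff_iff, pB_iff, pB_iff]
  constructor
  · rintro ⟨s, hs, he⟩; exact ⟨s, hs, by rw [← this s hs]; exact he⟩
  · rintro ⟨s, hs, he⟩; exact ⟨s, hs, by rw [this s hs]; exact he⟩

lemma qB_congr {u v : List ℕ} (n : ℕ) (h : u <+: v) {t : ℕ} (ht : t ≤ u.length) (i : ℕ) :
    qB n u t i = qB n v t i := by
  rw [Bool.eq_iff_iff, qB_iff, qB_iff]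
  constructor
  · intro hq l hl hil; rw [← pB_congr h ht l]; exact hq l hl hil
  · intro hq l hl hil; rw [pB_congr h ht l]; exact hq l hl hil

lemma pB_mono {u : List ℕ} {t t' i : ℕ} (h : t ≤ t') (hp : pB u t i = true) :
    pB u t' i = true := by
  rw [pB_iff] at hp ⊢
  obtain ⟨s, hs, he⟩ := hp
  exact ⟨s, by omega, he⟩

lemma qB_mono {n : ℕ} {u : List ℕ} {t t' i : ℕ} (h : t ≤ t') (hq : qB n u t i = true) :
    qB n u t' i = true := by
  rw [qB_iff] at hq ⊢
  exact fun l hl hil => pB_mono h (hq l hl hil)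

lemma pref_length (p : ℕ → ℕ) (m : ℕ) : (pref p m).length = m := by simp [pref]

lemma pref_getD (p : ℕ → ℕ) {s m : ℕ} (h : s < m) : (pref p m).getD s 0 = p s := by
  rw [pref, List.getD_eq_getElem?_getD, List.getElem?_ofFn]
  simp [List.ofFnNthVal, h]

lemma pref_prefix (p : ℕ → ℕ) {m m' : ℕ} (h : m ≤ m') : pref p m <+: pref p m' := by
  refine ⟨List.ofFn (fun i : Fin (m' - m) => p (m + i)), ?_⟩
  apply List.ext_getElem
  · simp [pref]; omega
  · intro j h1 h2
    simp only [pref] at h1 ⊢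
    rcases Nat.lt_or_ge j m with hj | hj
    · rw [List.getElem_append_left (by simpa [pref] using hj)]
      simp [pref]
    · rw [List.getElem_append_right (by simpa [pref] using hj)]
      simp only [pref, List.getElem_ofFn]
      congr 1
      simp
      omega



/-- The value of the enumeration produced by `K` at coded position `x`. -/
def eVal (n : ℕ) (u : List ℕ) (x : ℕ) : ℕ :=
  if x.unpair.2 % 3 = 0 then
    (if pB u (x.unpair.2 / 3 + 1) x.unpair.1 && !qB n u (x.unpair.2 / 3 + 1) x.unpair.1
      then 2 else 0)
  else if x.unpair.2 % 3 = 1 then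
    (if qB n u (x.unpair.2 / 3 + 1) x.unpair.1 && !pB u (x.unpair.2 / 3 + 1) x.unpair.1
      then 1 else 0)
  else x.unpair.2 / 3 + 3

def psiK (n : ℕ) (u : List ℕ) : List ℕ := (List.range u.length).map (eVal n u)

def gOf (n : ℕ) (u : List ℕ) : ℕ :=
  (List.range n).foldr (fun i acc => bif u.getD (i * i + i) 0 == 1 then i else acc) n

def psiH (n : ℕ) (u : List ℕ) : List ℕ :=
  (List.range (if u.length < n * n then 0 else u.length - n * n + 1)).map (fun _ => gOf n u)

lemma map_range_prefix {α : Type*} (f g : ℕ → α) {a b : ℕ} (hab : a ≤ b)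
    (h : ∀ x < a, f x = g x) : (List.range a).map f <+: (List.range b).map g := by
  have he : (List.range a).map f = ((List.range b).map g).take a := by
    rw [← List.map_take, List.take_range, Nat.min_eq_left hab]
    exact List.map_congr_left fun x hx => h x (List.mem_range.mp hx)
  rw [he]; exact List.take_prefix _ _

lemma map_range_getElem? {α : Type*} (f : ℕ → α) {a j : ℕ} (h : j < a) :
    ((List.range a).map f)[j]? = some (f j) := by
  rw [List.getElem?_map, List.getElem?_range h]; rfl

lemma eVal_congr {u v : List ℕ} (n : ℕ) (h : u <+: v) {x : ℕ} (hx : x < u.length) :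
    eVal n u x = eVal n v x := by
  have ht : x.unpair.2 / 3 + 1 ≤ u.length := by
    have := Nat.unpair_right_le x; omega
  unfold eVal
  rw [pB_congr h ht, qB_congr n h ht]

lemma psiK_monotone (n : ℕ) {u v : List ℕ} (h : u <+: v) : psiK n u <+: psiK n v :=
  map_range_prefix _ _ (h.length_le) (fun x hx => eVal_congr n h hx)

lemma gOf_aux_congr {u v : List ℕ} (n : ℕ) (h : ∀ i < n, u.getD (i * i + i) 0 = v.getD (i * i + i) 0) :
    ∀ a, (List.range n).foldr (fun i acc => bif u.getD (i * i + i) 0 == 1 then i else acc) a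
      = (List.range n).foldr (fun i acc => bif v.getD (i * i + i) 0 == 1 then i else acc) a := by
  induction n with
  | zero => simp
  | succ m ih =>
    intro a
    rw [List.range_succ, List.foldr_append, List.foldr_append]
    simp only [List.foldr]
    rw [h m (by omega)]
    exact ih (fun i hi => h i (by omega)) _

lemma gOf_congr {u v : List ℕ} (n : ℕ) (h : ∀ i < n, u.getD (i * i + i) 0 = v.getD (i * i + i) 0) :
    gOf n u = gOf n v := gOf_aux_congr n h n

lemma sq_lt {i n : ℕ} (h : i < n) : i * i + i < n * n := by nlinarith

lemma psiH_monotone (n : ℕ) {u v : List ℕ} (h : u <+: v) : psiH n u <+: psiH n v := by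
  unfold psiH
  have hl := h.length_le
  rcases Nat.lt_or_ge u.length (n * n) with h1 | h1
  · simp [h1]
  · have h2 : ¬ v.length < n * n := by omega
    rw [if_neg (by omega), if_neg h2]
    refine map_range_prefix _ _ (by omega) (fun x _ => ?_)
    exact gOf_congr n fun i hi => getD_congr_of_prefix h (by have := sq_lt hi; omega)
/-! Characterization of `gOf` as a least-index search. -/

lemma foldr_sel_all_false (c : ℕ → Bool) {n : ℕ} (h : ∀ i < n, c i = false) (a : ℕ) :
    (List.range n).foldr (fun i acc => bif c i then i else acc) a = a := by
  induction n generalizing a with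
  | zero => simp
  | succ m ih =>
    rw [List.range_succ, List.foldr_append]
    simp only [List.foldr, h m (by omega), Bool.cond_false]
    exact ih (fun i hi => h i (by omega)) a

lemma foldr_sel_find (c : ℕ → Bool) {n i : ℕ} (hin : i < n) (hc : c i = true)
    (hmin : ∀ j < i, c j = false) (a : ℕ) :
    (List.range n).foldr (fun i acc => bif c i then i else acc) a = i := by
  induction n generalizing a with
  | zero => omega
  | succ m ih =>
    rw [List.range_succ, List.foldr_append]
    simp only [List.foldr]
    rcases Nat.lt_or_ge i m with h1 | h1
    · exact ih h1 _
    · have : i = m := by omega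
      subst this
      rw [hc, Bool.cond_true]
      exact foldr_sel_all_false c hmin _

lemma gOf_spec_none {n : ℕ} {u : List ℕ} (h : ∀ i < n, u.getD (i * i + i) 0 ≠ 1) :
    gOf n u = n :=
  foldr_sel_all_false _ (fun i hi => by simpa using h i hi) n

lemma gOf_spec_find {n i : ℕ} {u : List ℕ} (hin : i < n) (hc : u.getD (i * i + i) 0 = 1)
    (hmin : ∀ j < i, u.getD (j * j + j) 0 ≠ 1) : gOf n u = i :=
  foldr_sel_find _ hin (by simpa using hc) (fun j hj => by simpa using hmin j hj) n

/-! Primitive recursiveness. -/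

lemma primrec_pB : Primrec fun a : List ℕ × ℕ × ℕ => pB a.1 a.2.1 a.2.2 := by
  have hh : Primrec₂ fun (a : List ℕ × ℕ × ℕ) (sb : ℕ × Bool) =>
      ((a.1.getD sb.1 0 == a.2.2 + 1) || sb.2) :=
    Primrec₂.comp Primrec.or
      (Primrec₂.comp Primrec.beq
        ((Primrec.list_getD 0).comp (Primrec.fst.comp Primrec.fst) (Primrec.fst.comp Primrec.snd))
        (Primrec.succ.comp (Primrec.snd.comp (Primrec.snd.comp Primrec.fst))))
      (Primrec.snd.comp Primrec.snd)
  exact Primrec.list_foldr (Primrec.list_range.comp (Primrec.fst.comp Primrec.snd))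
    (Primrec.const false) hh

lemma primrec_qB (n : ℕ) : Primrec fun a : List ℕ × ℕ × ℕ => qB n a.1 a.2.1 a.2.2 := by
  have hh : Primrec₂ fun (a : List ℕ × ℕ × ℕ) (lb : ℕ × Bool) =>
      ((decide (lb.1 ≤ a.2.2) || pB a.1 a.2.1 lb.1) && lb.2) :=
    Primrec₂.comp Primrec.and
      (Primrec₂.comp Primrec.or
        (Primrec.nat_le.comp (Primrec.fst.comp Primrec.snd)
          (Primrec.snd.comp (Primrec.snd.comp Primrec.fst))).decide
        (primrec_pB.comp (Primrec.pair (Primrec.fst.comp Primrec.fst)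
          (Primrec.pair (Primrec.fst.comp (Primrec.snd.comp Primrec.fst))
            (Primrec.fst.comp Primrec.snd)))))
      (Primrec.snd.comp Primrec.snd)
  exact Primrec.list_foldr (Primrec.const (List.range (n + 1))) (Primrec.const true) hh

lemma primrec_eVal (n : ℕ) : Primrec₂ (eVal n) := by
  have hi : Primrec fun a : List ℕ × ℕ => a.2.unpair.1 :=
    Primrec.fst.comp (Primrec.unpair.comp Primrec.snd)
  have hk : Primrec fun a : List ℕ × ℕ => a.2.unpair.2 :=
    Primrec.snd.comp (Primrec.unpair.comp Primrec.snd)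
  have ht : Primrec fun a : List ℕ × ℕ => a.2.unpair.2 / 3 + 1 :=
    Primrec.succ.comp (Primrec.nat_div.comp hk (Primrec.const 3))
  have hP : Primrec fun a : List ℕ × ℕ => pB a.1 (a.2.unpair.2 / 3 + 1) a.2.unpair.1 :=
    primrec_pB.comp (Primrec.pair Primrec.fst (Primrec.pair ht hi))
  have hQ : Primrec fun a : List ℕ × ℕ => qB n a.1 (a.2.unpair.2 / 3 + 1) a.2.unpair.1 :=
    (primrec_qB n).comp (Primrec.pair Primrec.fst (Primrec.pair ht hi))
  have hm0 : PrimrecPred fun a : List ℕ × ℕ => a.2.unpair.2 % 3 = 0 :=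
    Primrec.eq.comp (Primrec.nat_mod.comp hk (Primrec.const 3)) (Primrec.const 0)
  have hm1 : PrimrecPred fun a : List ℕ × ℕ => a.2.unpair.2 % 3 = 1 :=
    Primrec.eq.comp (Primrec.nat_mod.comp hk (Primrec.const 3)) (Primrec.const 1)
  have hb1 : PrimrecPred fun a : List ℕ × ℕ =>
      (pB a.1 (a.2.unpair.2 / 3 + 1) a.2.unpair.1
        && !qB n a.1 (a.2.unpair.2 / 3 + 1) a.2.unpair.1) = true :=
    Primrec.eq.comp (Primrec.and.comp hP (Primrec.not.comp hQ)) (Primrec.const true)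
  have hb2 : PrimrecPred fun a : List ℕ × ℕ =>
      (qB n a.1 (a.2.unpair.2 / 3 + 1) a.2.unpair.1
        && !pB a.1 (a.2.unpair.2 / 3 + 1) a.2.unpair.1) = true :=
    Primrec.eq.comp (Primrec.and.comp hQ (Primrec.not.comp hP)) (Primrec.const true)
  have : Primrec fun a : List ℕ × ℕ => eVal n a.1 a.2 := by
    unfold eVal
    exact Primrec.ite hm0
      (Primrec.ite hb1 (Primrec.const 2) (Primrec.const 0))
      (Primrec.ite hm1
        (Primrec.ite hb2 (Primrec.const 1) (Primrec.const 0))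
        (Primrec.succ.comp (Primrec.succ.comp (Primrec.succ.comp
          (Primrec.nat_div.comp hk (Primrec.const 3))))))
  exact this
  
lemma primrec_psiK (n : ℕ) : Primrec (psiK n) :=
  Primrec.list_map (Primrec.list_range.comp Primrec.list_length) (primrec_eVal n)

lemma primrec_gOf (n : ℕ) : Primrec (gOf n) := by
  have hh : Primrec₂ fun (u : List ℕ) (ia : ℕ × ℕ) =>
      bif u.getD (ia.1 * ia.1 + ia.1) 0 == 1 then ia.1 else ia.2 := by
    have hidx : Primrec fun b : List ℕ × ℕ × ℕ => b.2.1 * b.2.1 + b.2.1 :=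
      Primrec.nat_add.comp
        (Primrec.nat_mul.comp (Primrec.fst.comp Primrec.snd) (Primrec.fst.comp Primrec.snd))
        (Primrec.fst.comp Primrec.snd)
    exact Primrec.cond
      (Primrec.beq.comp ((Primrec.list_getD 0).comp Primrec.fst hidx) (Primrec.const 1))
      (Primrec.fst.comp Primrec.snd) (Primrec.snd.comp Primrec.snd)
  exact Primrec.list_foldr (Primrec.const (List.range n)) (Primrec.const n) hh

lemma primrec_psiH (n : ℕ) : Primrec (psiH n) := by
  have hcnt : Primrec fun u : List ℕ =>
      (if u.length < n * n then 0 else u.length - n * n + 1) :=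
    Primrec.ite (Primrec.nat_lt.comp Primrec.list_length (Primrec.const (n * n)))
      (Primrec.const 0)
      (Primrec.succ.comp (Primrec.nat_sub.comp Primrec.list_length (Primrec.const (n * n))))
  exact Primrec.list_map (Primrec.list_range.comp hcnt)
    (((primrec_gOf n).comp Primrec.fst).to₂)


/-! The reduction maps and their computability. -/

def Kfun (n : ℕ) (p : ℕ → ℕ) : ℕ → ℕ := fun x => eVal n (pref p (x + 1)) x

def Hfun (n : ℕ) (q : ℕ → ℕ) : ℕ → ℕ := fun _ => gOf n (pref q (n * n))

def Kmap (n : ℕ) : (ℕ → ℕ) →. (ℕ → ℕ) := fun p => Part.some (Kfun n p)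

def Hmap (n : ℕ) : (ℕ → ℕ) →. (ℕ → ℕ) := fun q => Part.some (Hfun n q)

lemma baireComputable_Kmap (n : ℕ) : BaireComputable (Kmap n) := by
  refine ⟨psiK n, (primrec_psiK n).to_comp, fun u v h => psiK_monotone n h, ?_⟩
  intro p q hq x
  rw [Kmap, Part.mem_some_iff] at hq
  subst hq
  refine ⟨x + 1, ?_⟩
  unfold psiK
  rw [pref_length]
  exact map_range_getElem? _ (by omega)

lemma baireComputable_Hmap (n : ℕ) : BaireComputable (Hmap n) := by
  refine ⟨psiH n, (primrec_psiH n).to_comp, fun u v h => psiH_monotone n h, ?_⟩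
  intro p q hq j
  rw [Hmap, Part.mem_some_iff] at hq
  subst hq
  refine ⟨n * n + j, ?_⟩
  unfold psiH
  rw [pref_length, if_neg (by omega)]
  have hcnt : n * n + j - n * n + 1 = j + 1 := by omega
  rw [hcnt]
  rw [map_range_getElem? _ (show j < j + 1 by omega)]
  have hg : gOf n (pref p (n * n + j)) = gOf n (pref p (n * n)) := by
    refine gOf_congr n fun i hi => ?_
    have h1 := sq_lt hi
    rw [pref_getD p (by omega), pref_getD p (by omega)]
  rw [hg]
  rfl

/-! Stage predicates and the sets `B i` produced by `K`. -/

def Pst (p : ℕ → ℕ) (T i : ℕ) : Prop := ∃ s < T, p s = i + 1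

def Qst (n : ℕ) (p : ℕ → ℕ) (T i : ℕ) : Prop := ∀ l ≤ n, i < l → ∃ s < T, p s = l + 1

lemma Pst_mono {p : ℕ → ℕ} {T T' i : ℕ} (h : T ≤ T') (hp : Pst p T i) : Pst p T' i := by
  obtain ⟨s, hs, he⟩ := hp; exact ⟨s, by omega, he⟩

lemma Qst_mono {n : ℕ} {p : ℕ → ℕ} {T T' i : ℕ} (h : T ≤ T') (hq : Qst n p T i) :
    Qst n p T' i := fun l hl hil => Pst_mono h (hq l hl hil)

lemma pB_pref {p : ℕ → ℕ} {T M : ℕ} (h : T ≤ M) (i : ℕ) :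
    pB (pref p M) T i = true ↔ Pst p T i := by
  rw [pB_iff]
  refine exists_congr fun s => ?_
  constructor
  · rintro ⟨hs, he⟩; exact ⟨hs, by rw [← pref_getD p (show s < M by omega)]; exact he⟩
  · rintro ⟨hs, he⟩; exact ⟨hs, by rw [pref_getD p (show s < M by omega)]; exact he⟩

lemma qB_pref {n : ℕ} {p : ℕ → ℕ} {T M : ℕ} (h : T ≤ M) (i : ℕ) :
    qB n (pref p M) T i = true ↔ Qst n p T i := by
  rw [qB_iff]
  constructor
  · intro hq l hl hil; exact (pB_pref h l).mp (hq l hl hil)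
  · intro hq l hl hil; exact (pB_pref h l).mpr (hq l hl hil)

lemma Kfun_pair (n : ℕ) (p : ℕ → ℕ) (i t : ℕ) :
    Kfun n p (Nat.pair i t) =
      if t % 3 = 0 then
        (if Pst p (t / 3 + 1) i ∧ ¬ Qst n p (t / 3 + 1) i then 2 else 0)
      else if t % 3 = 1 then
        (if Qst n p (t / 3 + 1) i ∧ ¬ Pst p (t / 3 + 1) i then 1 else 0)
      else t / 3 + 3 := by
  have hM : t / 3 + 1 ≤ Nat.pair i t + 1 := by
    have := Nat.right_le_pair i t; omega
  have hp := pB_pref (p := p) hM i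
  have hq := qB_pref (n := n) (p := p) hM i
  simp only [Kfun, eVal, Nat.unpair_pair]
  have c1 : ((pB (pref p (Nat.pair i t + 1)) (t / 3 + 1) i
      && !qB n (pref p (Nat.pair i t + 1)) (t / 3 + 1) i) = true)
      ↔ (Pst p (t / 3 + 1) i ∧ ¬ Qst n p (t / 3 + 1) i) := by
    rw [Bool.and_eq_true, Bool.not_eq_true']
    rw [← hp, ← hq]
    simp
  have c2 : ((qB n (pref p (Nat.pair i t + 1)) (t / 3 + 1) i
      && !pB (pref p (Nat.pair i t + 1)) (t / 3 + 1) i) = true)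
      ↔ (Qst n p (t / 3 + 1) i ∧ ¬ Pst p (t / 3 + 1) i) := by
    rw [Bool.and_eq_true, Bool.not_eq_true']
    rw [← hp, ← hq]
    simp
  by_cases h0 : t % 3 = 0
  · rw [if_pos h0, if_pos h0, if_congr c1 rfl rfl]
  · by_cases h1 : t % 3 = 1
    · rw [if_neg h0, if_neg h0, if_pos h1, if_pos h1, if_congr c2 rfl rfl]
    · rw [if_neg h0, if_neg h0, if_neg h1, if_neg h1]

def Bset (n : ℕ) (p : ℕ → ℕ) (i : ℕ) : Set ℕ := {m | ∀ t, Kfun n p (Nat.pair i t) ≠ m + 1}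

lemma not_mem_Bset_two (n : ℕ) (p : ℕ → ℕ) (i m : ℕ) : m + 2 ∉ Bset n p i := by
  intro h
  have hne := h (3 * m + 2)
  rw [Kfun_pair, if_neg (by omega), if_neg (by omega)] at hne
  have : (3 * m + 2) / 3 = m := by omega
  omega

lemma Bset_subset (n : ℕ) (p : ℕ → ℕ) (i : ℕ) : Bset n p i ⊆ Set.Iio 2 := by
  intro m hm
  by_contra h
  have h2 : m = (m - 2) + 2 := by simp at h; omega
  rw [h2] at hm
  exact not_mem_Bset_two n p i (m - 2) hm

lemma zero_mem_Bset_iff {n : ℕ} {p : ℕ → ℕ} {i : ℕ} :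
    0 ∈ Bset n p i ↔ ∀ s, ¬ (Qst n p (s + 1) i ∧ ¬ Pst p (s + 1) i) := by
  constructor
  · intro h s hc
    have hne := h (3 * s + 1)
    rw [Kfun_pair, if_neg (by omega), if_pos (by omega),
      show (3 * s + 1) / 3 = s from by omega, if_pos hc] at hne
    exact hne rfl
  · intro h t
    rw [Kfun_pair]
    by_cases h0 : t % 3 = 0
    · rw [if_pos h0]; split_ifs <;> omega
    · by_cases h1 : t % 3 = 1
      · rw [if_neg h0, if_pos h1, if_neg (h (t / 3))]
        omega
      · rw [if_neg h0, if_neg h1]; omega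

lemma one_mem_Bset_iff {n : ℕ} {p : ℕ → ℕ} {i : ℕ} :
    1 ∈ Bset n p i ↔ ∀ s, ¬ (Pst p (s + 1) i ∧ ¬ Qst n p (s + 1) i) := by
  constructor
  · intro h s hc
    have hne := h (3 * s)
    rw [Kfun_pair, if_pos (by omega), show (3 * s) / 3 = s from by omega, if_pos hc] at hne
    exact hne rfl
  · intro h t
    rw [Kfun_pair]
    by_cases h0 : t % 3 = 0
    · rw [if_pos h0, if_neg (h (t / 3))]
      omega
    · by_cases h1 : t % 3 = 1
      · rw [if_neg h0, if_pos h1]; split_ifs <;> omega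
      · rw [if_neg h0, if_neg h1]; omega

lemma Bset_nonempty (n : ℕ) (p : ℕ → ℕ) (i : ℕ) : (Bset n p i).Nonempty := by
  by_cases h1 : (1 : ℕ) ∈ Bset n p i
  · exact ⟨1, h1⟩
  · refine ⟨0, zero_mem_Bset_iff.mpr ?_⟩
    simp only [Bset, Set.mem_setOf_eq, not_forall, not_not] at h1
    obtain ⟨t, ht⟩ := h1
    rw [Kfun_pair] at ht
    by_cases h0 : t % 3 = 0
    · rw [if_pos h0] at ht
      by_cases hc : Pst p (t / 3 + 1) i ∧ ¬ Qst n p (t / 3 + 1) i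
      · intro s hs
        rcases le_or_gt (s + 1) (t / 3 + 1) with hle | hlt
        · exact hc.2 (Qst_mono hle hs.1)
        · exact hs.2 (Pst_mono (by omega) hc.1)
      · rw [if_neg hc] at ht; omega
    · exfalso
      by_cases h1' : t % 3 = 1
      · rw [if_neg h0, if_pos h1'] at ht
        split_ifs at ht <;> omega
      · rw [if_neg h0, if_neg h1'] at ht; omega

lemma lemA {n i : ℕ} (p : ℕ → ℕ) (h1 : (1 : ℕ) ∈ Bset n p i) (hiA : ∃ s, p s = i + 1) :
    ∀ l ≤ n, i < l → ∃ s, p s = l + 1 := by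
  obtain ⟨s, hs⟩ := hiA
  have hP : Pst p (s + 1) i := ⟨s, by omega, hs⟩
  rw [one_mem_Bset_iff] at h1
  have hQ : Qst n p (s + 1) i := by
    by_contra hq; exact h1 s ⟨hP, hq⟩
  intro l hl hil
  obtain ⟨s', _, he⟩ := hQ l hl hil
  exact ⟨s', he⟩

lemma exists_stage {n i : ℕ} (p : ℕ → ℕ) (hQ : ∀ l ≤ n, i < l → ∃ s, p s = l + 1) :
    ∃ T, Qst n p T i := by
  induction n with
  | zero =>
    refine ⟨0, fun l hl hil => ?_⟩
    omega
  | succ m ih =>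
    obtain ⟨T, hT⟩ := ih (fun l hl hil => hQ l (by omega) hil)
    by_cases h : i < m + 1
    · obtain ⟨s, hs⟩ := hQ (m + 1) le_rfl h
      refine ⟨max T (s + 1), fun l hl hil => ?_⟩
      rcases Nat.lt_or_ge l (m + 1) with h2 | h2
      · exact Pst_mono (le_max_left _ _) (hT l (by omega) hil)
      · have : l = m + 1 := by omega
        subst this
        exact ⟨s, by omega, hs⟩
    · refine ⟨T, fun l hl hil => ?_⟩
      rcases Nat.lt_or_ge l (m + 1) with h2 | h2
      · exact hT l (by omega) hil
      · omega

lemma lemB {n i : ℕ} (p : ℕ → ℕ) (h0 : (0 : ℕ) ∈ Bset n p i)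
    (hQ : ∀ l ≤ n, i < l → ∃ s, p s = l + 1) : ∃ s, p s = i + 1 := by
  obtain ⟨T, hT⟩ := exists_stage p hQ
  rw [zero_mem_Bset_iff] at h0
  have hQT : Qst n p (T + 1) i := Qst_mono (by omega) hT
  have hP : Pst p (T + 1) i := by
    by_contra hp; exact h0 T ⟨hQT, hp⟩
  obtain ⟨s, _, hs⟩ := hP
  exact ⟨s, hs⟩

lemma pair_zero (i : ℕ) : Nat.pair i 0 = i * i + i := by
  simp [Nat.pair]

end CfinSW

open CfinSW

/-- `C_{n+1} ≤_sW C₂ⁿ`. -/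
theorem cfin_succ_swred_c2_pow (n : ℕ) :
    SWRed enumNegRep repNat (finProdRep n enumNegRep) (finProdRep n repNat)
      (CFin (n + 1)) (finProdProblem n (CFin 2)) := by
  classical
  refine ⟨Hmap n, Kmap n, baireComputable_Hmap n, baireComputable_Kmap n, ?_⟩
  intro G hG p A hA hne
  have hAeq : A = {m | ∀ t, p t ≠ m + 1} := Part.mem_some_iff.mp hA
  obtain ⟨a0, ha0A, hsub⟩ := hne
  -- the instance of `C₂ⁿ` produced by `K`
  set r : ℕ → ℕ := Kfun n p with hr
  set B : Fin n → Set ℕ := fun i => Bset n p i with hBdef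
  have hBdom : ∀ i : Fin n, ∃ x, x ∈ enumNegRep.δ (proj r i) :=
    fun i => ⟨_, Part.mem_some _⟩
  have hBmem : B ∈ (finProdRep n enumNegRep).δ r := by
    refine mem_part_mk hBdom ?_
    funext i
    exact Part.mem_some_iff.mp (Classical.choose_spec (hBdom i))
  have hBne : (finProdProblem n (CFin 2) B).Nonempty := by
    classical
    refine ⟨fun i => if (1 : ℕ) ∈ B i then 1 else 0, fun i => ⟨?_, Bset_subset n p i⟩⟩
    show (if (1 : ℕ) ∈ B i then (1 : ℕ) else 0) ∈ B i
    split_ifs with h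
    · exact h
    · obtain ⟨b, hb⟩ := Bset_nonempty n p i
      have hb2 := Bset_subset n p i hb
      have : b = 0 := by
        rcases Set.mem_Iio.mp hb2 with _
        interval_cases b
        · rfl
        · exact absurd hb h
      rw [← this]; exact hb
  obtain ⟨q, hqG, y, hy, hyB⟩ := hG r B hBmem hBne
  obtain ⟨hydom, hyeq⟩ := Part.mem_mk_iff.mp hy
  have hyval : ∀ i : Fin n, y i = q (Nat.pair i 0) := by
    intro i
    rw [← hyeq]
    exact Part.mem_some_iff.mp (Classical.choose_spec (hydom i))
  have hbit : ∀ i : Fin n, q (i * i + (i : ℕ)) ∈ Bset n p i := by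
    intro i
    have := (hyB i).1
    rw [hyval i, pair_zero] at this
    exact this
  set m0 := gOf n (pref q (n * n)) with hm0
  have hget : ∀ i < n, (pref q (n * n)).getD (i * i + i) 0 = q (i * i + i) :=
    fun i hi => pref_getD q (sq_lt hi)
  -- zero bits give elimination steps
  have hzero : ∀ i : Fin n, q (i * i + (i : ℕ)) ≠ 1 → (0 : ℕ) ∈ Bset n p i := by
    intro i hne1
    have h1 := hbit i
    have h2 := Bset_subset n p i h1
    have : q (i * i + (i : ℕ)) = 0 := by
      have := Set.mem_Iio.mp h2
      omega
    rw [← this]; exact h1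
  have hAiff : ∀ a, a ∈ A ↔ ∀ t, p t ≠ a + 1 := by
    intro a; rw [hAeq]; rfl
  have hAbd : ∀ a ∈ A, a < n + 1 := fun a ha => Set.mem_Iio.mp (hsub ha)
  -- the descent
  have descent : ∀ j, j ≤ n → (∀ i : Fin n, (i : ℕ) < j → (0 : ℕ) ∈ Bset n p i) →
      (∀ a ∈ A, a < j) → False := by
    intro j
    induction j with
    | zero => intro _ _ hE; exact absurd (hE a0 ha0A) (by omega)
    | succ m ih =>
      intro hmn h0 hE
      have hmem : ∃ s, p s = m + 1 := by
        refine lemB p (h0 ⟨m, by omega⟩ (by simp)) ?_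
        intro l hl hml
        have hlA : l ∉ A := fun hla => absurd (hE l hla) (by omega)
        rw [hAiff] at hlA
        push_neg at hlA
        exact hlA
      refine ih (by omega) (fun i hi => h0 i (by omega)) (fun a ha => ?_)
      have h1 := hE a ha
      have h2 : a ≠ m := by
        intro he
        obtain ⟨s, hs⟩ := hmem
        exact ((hAiff a).mp ha s) (by omega)
      omega
  have hm0A : m0 ∈ A := by
    by_contra hm0n
    by_cases hex : ∃ i, i < n ∧ q (i * i + i) = 1
    · set i0 := Nat.find hex with hi0
      obtain ⟨hi0n, hc⟩ := Nat.find_spec hex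
      have hmin : ∀ j < i0, q (j * j + j) ≠ 1 := by
        intro j hj hq1
        exact Nat.find_min hex hj ⟨by omega, hq1⟩
      have hm0eq : m0 = i0 := by
        rw [hm0]
        exact gOf_spec_find hi0n (by rw [hget i0 hi0n]; exact hc)
          (fun j hj => by rw [hget j (by omega)]; exact hmin j hj)
      rw [hm0eq] at hm0n
      have hnotA : ∃ s, p s = i0 + 1 := by
        rw [hAiff] at hm0n; push_neg at hm0n; exact hm0n
      have h1B : (1 : ℕ) ∈ Bset n p i0 := by
        have := hbit ⟨i0, hi0n⟩
        simp only at this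
        rw [hc] at this
        exact this
      have hup := lemA p h1B hnotA
      refine descent i0 (by omega) (fun i hi => hzero i (hmin i hi)) ?_
      intro a ha
      have han := hAbd a ha
      have : ¬ (i0 < a) := by
        intro hlt
        obtain ⟨s, hs⟩ := hup a (by omega) hlt
        exact ((hAiff a).mp ha s) hs
      have : a ≠ i0 := by
        intro he
        obtain ⟨s, hs⟩ := hnotA
        exact ((hAiff a).mp ha s) (by omega)
      omega
    · push_neg at hex
      have hm0eq : m0 = n := by
        rw [hm0]
        exact gOf_spec_none (fun i hi => by rw [hget i hi]; exact hex i hi)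
      rw [hm0eq] at hm0n
      refine descent n le_rfl (fun i hi => hzero i (hex i i.isLt)) ?_
      intro a ha
      have han := hAbd a ha
      have : a ≠ n := fun he => hm0n (he ▸ ha)
      omega
  refine ⟨fun _ => m0, ?_, m0, Part.mem_some _, hm0A, hsub⟩
  refine Part.mem_bind_iff.mpr ⟨r, Part.mem_some _, ?_⟩
  refine Part.mem_bind_iff.mpr ⟨q, hqG, ?_⟩
  rw [Hmap, Part.mem_some_iff]
  rfl
end

section
/- LPO* is strongly Weihrauch equivalent to the minimum function min : ℕ^ℕ → ℕ, p ↦ min{p(n) : n ∈ ℕ}. -/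
open scoped Classical

/-! ## Auxiliary development for LPO* ≡ min -/

namespace LPOmin

/-- Binary encoding of a list of digits. -/
def encL (l : List ℕ) : ℕ := l.foldr (fun b acc => b + 2 * acc) 0

/-- The `i`-th binary digit. -/
def dig (i c : ℕ) : ℕ := c / 2 ^ i % 2

lemma dig_succ (i c : ℕ) : dig (i + 1) c = dig i (c / 2) := by
  simp [dig, pow_succ, Nat.div_div_eq_div_mul, Nat.mul_comm]

lemma dig_encL : ∀ l : List ℕ, (∀ b ∈ l, b ≤ 1) → ∀ i, i < l.length →
    dig i (encL l) = l.getD i 0 := by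
  intro l
  induction l with
  | nil => intro _ i hi; simp at hi
  | cons b l ih =>
    intro hb i hi
    have hb0 : b ≤ 1 := hb b (by simp)
    match i with
    | 0 =>
      show (b + 2 * encL l) / 2 ^ 0 % 2 = b
      simp only [pow_zero, Nat.div_one]
      omega
    | i + 1 =>
      have h2 : (b + 2 * encL l) / 2 = encL l := by omega
      rw [show encL (b :: l) = b + 2 * encL l from rfl, dig_succ, h2]
      have := ih (fun x hx => hb x (by simp [hx])) i (by simpa using hi)
      simpa using this

lemma encL_map_mono {f g : ℕ → ℕ} : ∀ l : List ℕ, (∀ j ∈ l, f j ≤ g j) →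
    encL (l.map f) ≤ encL (l.map g) := by
  intro l
  induction l with
  | nil => intro _; simp
  | cons a l ih =>
    intro h
    have h1 := h a (by simp)
    have h2 := ih (fun j hj => h j (by simp [hj]))
    show f a + 2 * encL (l.map f) ≤ g a + 2 * encL (l.map g)
    omega

lemma foldr_congr' {f g : ℕ → ℕ → ℕ} : ∀ (l : List ℕ) (b : ℕ),
    (∀ j ∈ l, ∀ acc, f j acc = g j acc) → l.foldr f b = l.foldr g b := by
  intro l
  induction l with
  | nil => intros; rfl
  | cons a l ih =>
    intro b h
    show f a (l.foldr f b) = g a (l.foldr g b)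
    rw [ih b (fun j hj acc => h j (by simp [hj]) acc), h a (by simp)]

lemma foldr_if_zero (P : ℕ → Prop) [DecidablePred P] : ∀ (l : List ℕ) (b : ℕ),
    l.foldr (fun j acc => if P j then 0 else acc) b = if ∃ j ∈ l, P j then 0 else b := by
  intro l
  induction l with
  | nil => intro b; simp
  | cons a l ih =>
    intro b
    show (if P a then 0 else l.foldr _ b) = _
    by_cases h : P a
    · simp [h]
    · have hiff : (∃ j ∈ a :: l, P j) ↔ (∃ j ∈ l, P j) := by
        simp only [List.mem_cons]
        constructor
        · rintro ⟨j, hj | hj, hPj⟩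
          · exact absurd (hj ▸ hPj) h
          · exact ⟨j, hj, hPj⟩
        · rintro ⟨j, hj, hPj⟩; exact ⟨j, Or.inr hj, hPj⟩
      rw [if_neg h, ih b]
      exact (if_congr hiff.symm rfl rfl)

lemma foldr_no (P : ℕ → Prop) [DecidablePred P] : ∀ (l : List ℕ) (d : ℕ),
    (∀ j ∈ l, ¬ P j) → l.foldr (fun j acc => if P j then j else acc) d = d := by
  intro l
  induction l with
  | nil => intros; rfl
  | cons a l ih =>
    intro d h
    show (if P a then a else l.foldr _ d) = d
    rw [if_neg (h a (by simp)), ih d (fun j hj => h j (by simp [hj]))]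

lemma foldr_first (P : ℕ → Prop) [DecidablePred P] (μ : ℕ) :
    ∀ (n : ℕ) (d : ℕ), (∀ j < n, (P j ↔ μ ≤ j)) → μ < n →
      (List.range n).foldr (fun j acc => if P j then j else acc) d = μ := by
  intro n
  induction n with
  | zero => intro d _ h; omega
  | succ n ih =>
    intro d hiff hlt
    rw [List.range_succ, List.foldr_append]
    show (List.range n).foldr _ (if P n then n else d) = μ
    by_cases h : μ < n
    · exact ih _ (fun j hj => hiff j (by omega)) h
    · have hμ : μ = n := by omega
      have hPn : P n := (hiff n (by omega)).mpr (by omega)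
      rw [foldr_no P _ _ (fun j hj => by
        have := hiff j (by simp at hj; omega)
        simp only [List.mem_range] at hj
        intro hp; exact absurd ((hiff j (by omega)).mp hp) (by omega))]
      simp [hPn, hμ]

lemma pair_mono_r {a b b' : ℕ} (h : b ≤ b') : Nat.pair a b ≤ Nat.pair a b' := by
  rcases Nat.lt_or_ge b b' with h' | h'
  · exact le_of_lt (Nat.pair_lt_pair_right a h')
  · have : b = b' := by omega
    rw [this]

lemma pair_left_strict {a a' b : ℕ} (h : a < a') : Nat.pair a b < Nat.pair a' b :=
  Nat.pair_lt_pair_left b h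

/-! ### prefix helpers -/

lemma pref_length (p : ℕ → ℕ) (m : ℕ) : (pref p m).length = m := by simp [pref]

lemma pref_getD (p : ℕ → ℕ) {m j : ℕ} (h : j < m) (d : ℕ) :
    (pref p m).getD j d = p j := by
  rw [List.getD_eq_getElem _ _ (by simpa [pref_length] using h)]
  simp [pref, List.getElem_ofFn]

lemma prefix_getD {u v : List ℕ} (h : u <+: v) {j : ℕ} (hj : j < u.length) (d : ℕ) :
    u.getD j d = v.getD j d := by
  obtain ⟨w, rfl⟩ := h
  rw [List.getD_eq_getElem _ _ hj, List.getD_eq_getElem _ _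
    (by simpa using Nat.lt_of_lt_of_le hj (by simp)), List.getElem_append_left hj]

/-! ### generic shape of our computable word functions -/

def psiOf (L : List ℕ → ℕ) (F : List ℕ → ℕ → ℕ) : List ℕ → List ℕ :=
  fun u => (List.range (L u)).map (F u)

lemma psiOf_prefix {L : List ℕ → ℕ} {F : List ℕ → ℕ → ℕ}
    (hL : ∀ u v, u <+: v → L u ≤ L v)
    (hF : ∀ u v, u <+: v → ∀ t, t < L u → F u t = F v t) :
    ∀ u v, u <+: v → psiOf L F u <+: psiOf L F v := by
  intro u v huv
  have h1 : psiOf L F u = ((List.range (L v)).take (L u)).map (F v) := by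
    rw [List.take_range, Nat.min_eq_left (hL u v huv)]
    exact List.map_congr_left fun t ht => hF u v huv t (List.mem_range.mp ht)
  rw [h1, List.map_take]
  exact List.take_prefix _ _

lemma psiOf_get {L : List ℕ → ℕ} {F : List ℕ → ℕ → ℕ} {u : List ℕ} {t : ℕ}
    (h : t < L u) : (psiOf L F u)[t]? = some (F u t) := by
  simp [psiOf, List.getElem?_map, List.getElem?_range h]

lemma baire_of (Ffun : (ℕ → ℕ) →. (ℕ → ℕ)) (L : List ℕ → ℕ) (F : List ℕ → ℕ → ℕ)
    (hLp : Primrec L) (hFp : Primrec₂ F)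
    (hL : ∀ u v, u <+: v → L u ≤ L v)
    (hF : ∀ u v, u <+: v → ∀ t, t < L u → F u t = F v t)
    (hconv : ∀ p q, q ∈ Ffun p → ∀ t, ∃ m, t < L (pref p m) ∧ F (pref p m) t = q t) :
    BaireComputable Ffun := by
  refine ⟨psiOf L F, ?_, psiOf_prefix hL hF, ?_⟩
  · exact (Primrec.list_map (Primrec.list_range.comp hLp) hFp).to_comp
  · intro p q hq t
    obtain ⟨m, h1, h2⟩ := hconv p q hq t
    exact ⟨m, by rw [psiOf_get h1, h2]⟩

/-! ### Direction 1: LPO* ≤ min -/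

def bitF (g : ℕ → ℕ) (m i : ℕ) : ℕ :=
  (List.range m).foldr
    (fun j acc => if 1 ≤ j ∧ (Nat.unpair (j - 1)).1 = i ∧ g j = 0 then 0 else acc) 1

noncomputable def gInd (p : ℕ → ℕ) (i : ℕ) : ℕ :=
  if ∃ k, p (Nat.pair i k + 1) = 0 then 0 else 1

def sF (g : ℕ → ℕ) (m : ℕ) : ℕ :=
  Nat.pair (g 0) (encL ((List.range (g 0)).map (fun i => bitF g m i)))

noncomputable def cOf (p : ℕ → ℕ) : ℕ := encL ((List.range (p 0)).map (gInd p))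

def K1 : (ℕ → ℕ) →. (ℕ → ℕ) := fun p => Part.some (fun m => sF p m)

def outH1 (a : ℕ) : ℕ → ℕ := fun t =>
  Nat.casesOn t (Nat.unpair a).1 (fun t' => 1 - dig (Nat.unpair t').1 (Nat.unpair a).2)

def H1 : (ℕ → ℕ) →. (ℕ → ℕ) := fun q => Part.some (outH1 (q 0))

lemma bitF_congr {g g' : ℕ → ℕ} {m : ℕ} (h : ∀ j < m, g j = g' j) (i : ℕ) :
    bitF g m i = bitF g' m i :=
  foldr_congr' _ _ (fun j hj acc => by rw [h j (List.mem_range.mp hj)])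

lemma sF_congr {g g' : ℕ → ℕ} {m : ℕ} (h : ∀ j ≤ m, g j = g' j) :
    sF g m = sF g' m := by
  unfold sF
  rw [h 0 (Nat.zero_le m)]
  congr 1
  exact congrArg encL (List.map_congr_left fun i _ =>
    bitF_congr (fun j hj => h j (le_of_lt hj)) i)

lemma bitF_eq (g : ℕ → ℕ) (m i : ℕ) :
    bitF g m i = if ∃ k, Nat.pair i k + 1 < m ∧ g (Nat.pair i k + 1) = 0 then 0 else 1 := by
  unfold bitF
  rw [foldr_if_zero]
  congr 1
  simp only [List.mem_range, eq_iff_iff]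
  constructor
  · rintro ⟨j, hj, h1, h2, h3⟩
    refine ⟨(Nat.unpair (j - 1)).2, ?_, ?_⟩
    · rw [← h2, Nat.pair_unpair]; omega
    · rw [← h2, Nat.pair_unpair]; rwa [show j - 1 + 1 = j by omega]
  · rintro ⟨k, hk, h0⟩
    exact ⟨Nat.pair i k + 1, hk, by omega, by simp [Nat.unpair_pair], h0⟩

lemma bitF_le_one (g : ℕ → ℕ) (m i : ℕ) : bitF g m i ≤ 1 := by
  rw [bitF_eq]; split <;> omega

lemma gInd_le_bitF (p : ℕ → ℕ) (m i : ℕ) : gInd p i ≤ bitF p m i := by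
  unfold gInd
  rw [bitF_eq]
  by_cases h : ∃ k, p (Nat.pair i k + 1) = 0
  · simp [h]
  · rw [if_neg h, if_neg (by rintro ⟨k, _, hk⟩; exact h ⟨k, hk⟩)]

lemma exists_bitF_eq_gInd (p : ℕ → ℕ) :
    ∃ m, ∀ i < p 0, bitF p m i = gInd p i := by
  classical
  refine ⟨(Finset.range (p 0)).sup (fun i =>
    if h : ∃ k, p (Nat.pair i k + 1) = 0 then Nat.pair i h.choose + 2 else 0), ?_⟩
  intro i hi
  rw [bitF_eq]
  unfold gInd
  by_cases h : ∃ k, p (Nat.pair i k + 1) = 0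
  · rw [if_pos h, if_pos]
    refine ⟨h.choose, ?_, h.choose_spec⟩
    have hle : (if h : ∃ k, p (Nat.pair i k + 1) = 0 then Nat.pair i h.choose + 2 else 0) ≤
        (Finset.range (p 0)).sup (fun i =>
          if h : ∃ k, p (Nat.pair i k + 1) = 0 then Nat.pair i h.choose + 2 else 0) :=
      Finset.le_sup (f := fun i =>
        if h : ∃ k, p (Nat.pair i k + 1) = 0 then Nat.pair i h.choose + 2 else 0)
        (Finset.mem_range.mpr hi)
    rw [dif_pos h] at hle
    omega
  · rw [if_neg h, if_neg (by rintro ⟨k, _, hk⟩; exact h ⟨k, hk⟩)]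

lemma minProblem_nonempty (p : ℕ → ℕ) : (minProblem p).Nonempty := by
  refine ⟨sInf (Set.range p), Nat.sInf_mem (Set.range_nonempty p), fun m => Nat.sInf_le ⟨m, rfl⟩⟩

lemma minProblem_unique {p : ℕ → ℕ} {a b : ℕ} (ha : a ∈ minProblem p)
    (hb : b ∈ minProblem p) : a = b := by
  obtain ⟨⟨i, hi⟩, ha2⟩ := ha
  obtain ⟨⟨j, hj⟩, hb2⟩ := hb
  have h1 := ha2 j
  have h2 := hb2 i
  omega

lemma min_sF (p : ℕ → ℕ) :
    Nat.pair (p 0) (cOf p) ∈ minProblem (fun m => sF p m) := by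
  constructor
  · obtain ⟨m, hm⟩ := exists_bitF_eq_gInd p
    refine ⟨m, ?_⟩
    show sF p m = _
    unfold sF cOf
    congr 2
    exact List.map_congr_left fun i hi => hm i (List.mem_range.mp hi)
  · intro m
    show Nat.pair (p 0) (cOf p) ≤ sF p m
    unfold sF cOf
    exact pair_mono_r (encL_map_mono _ (fun j hj => gInd_le_bitF p m j))

/-! ### Direction 2: min ≤ LPO* -/

def sQ (p : ℕ → ℕ) : ℕ → ℕ := fun t =>
  Nat.casesOn t (p 0 + 1)
    (fun m => if p (Nat.unpair m).2 ≤ (Nat.unpair m).1 then 0 else 1)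

def K2 : (ℕ → ℕ) →. (ℕ → ℕ) := fun p => Part.some (sQ p)

def valH2 (g : ℕ → ℕ) : ℕ :=
  (List.range (g 0)).foldr (fun j acc => if g (Nat.pair j 0 + 1) = 1 then j else acc) 0

def H2 : (ℕ → ℕ) →. (ℕ → ℕ) := fun q => Part.some (fun _ => valH2 q)

lemma sQ_congr {g g' : ℕ → ℕ} {t : ℕ} (h : ∀ j ≤ t, g j = g' j) :
    sQ g t = sQ g' t := by
  match t with
  | 0 => show g 0 + 1 = g' 0 + 1; rw [h 0 le_rfl]
  | m + 1 =>
    show (if g (Nat.unpair m).2 ≤ _ then 0 else 1) = _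
    rw [h (Nat.unpair m).2 (le_of_lt (Nat.lt_succ_of_le (Nat.unpair_right_le m)))]
    rfl

lemma pair_j0_lt {j n : ℕ} (h : j < n) : Nat.pair j 0 + 1 ≤ Nat.pair n 0 :=
  pair_left_strict h

lemma valH2_congr {g g' : ℕ → ℕ} (h : ∀ j ≤ Nat.pair (g 0) 0, g j = g' j) :
    valH2 g = valH2 g' := by
  unfold valH2
  have h0 : g 0 = g' 0 := h 0 (Nat.zero_le _)
  rw [← h0]
  exact foldr_congr' _ _ (fun j hj acc => by
    rw [h (Nat.pair j 0 + 1) (pair_j0_lt (List.mem_range.mp hj))])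

/-! ### Primitive recursiveness of the word functions -/

section Prim
open Primrec

lemma primrec_encL : Primrec encL := by
  have h := Primrec.list_foldr (α := List ℕ) (β := ℕ) (σ := ℕ)
    (f := fun l => l) (g := fun _ => 0) (h := fun _ p => p.1 + 2 * p.2)
    Primrec.id (const 0)
    (Primrec₂.mk (nat_add.comp (fst.comp snd) (nat_mul.comp (const 2) (snd.comp snd))))
  exact h.of_eq fun l => rfl

private lemma hu0A : Primrec (fun a : List ℕ × ℕ => a.1.getD 0 0) :=
  (Primrec.list_getD 0).comp fst (const 0)

lemma primrec_bitF :
    Primrec₂ (fun (a : List ℕ × ℕ) (i : ℕ) => bitF (fun j => a.1.getD j 0) a.2 i) := by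
  apply Primrec₂.mk
  have hcond : PrimrecPred (fun x : (List ℕ × ℕ) × ℕ × (ℕ × ℕ) =>
      1 ≤ x.2.2.1 ∧ (Nat.unpair (x.2.2.1 - 1)).1 = x.2.1 ∧ x.1.1.getD x.2.2.1 0 = 0) := by
    refine PrimrecPred.and ?_ (PrimrecPred.and ?_ ?_)
    · exact nat_le.comp (const 1) (fst.comp (snd.comp snd))
    · exact Primrec.eq.comp
        (fst.comp (Primrec.unpair.comp (pred.comp (fst.comp (snd.comp snd)))))
        (fst.comp snd)
    · exact Primrec.eq.comp
        ((Primrec.list_getD 0).comp (fst.comp fst) (fst.comp (snd.comp snd)))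
        (const 0)
  have hh : Primrec₂ (fun (b : (List ℕ × ℕ) × ℕ) (js : ℕ × ℕ) =>
      if 1 ≤ js.1 ∧ (Nat.unpair (js.1 - 1)).1 = b.2 ∧ b.1.1.getD js.1 0 = 0
        then 0 else js.2) := by
    apply Primrec₂.mk
    have := Primrec.ite (α := ((List ℕ × ℕ) × ℕ) × (ℕ × ℕ))
      (c := fun x => 1 ≤ x.2.1 ∧ (Nat.unpair (x.2.1 - 1)).1 = x.1.2 ∧
        x.1.1.1.getD x.2.1 0 = 0)
      (f := fun _ => 0) (g := fun x => x.2.2)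
      (by
        refine PrimrecPred.and ?_ (PrimrecPred.and ?_ ?_)
        · exact nat_le.comp (const 1) (fst.comp snd)
        · exact Primrec.eq.comp
            (fst.comp (Primrec.unpair.comp (pred.comp (fst.comp snd))))
            (snd.comp fst)
        · exact Primrec.eq.comp
            ((Primrec.list_getD 0).comp (fst.comp (fst.comp fst)) (fst.comp snd))
            (const 0))
      (const 0) (snd.comp snd)
    exact this
  have hfold := Primrec.list_foldr (α := (List ℕ × ℕ) × ℕ) (β := ℕ) (σ := ℕ)
    (f := fun b => List.range b.1.2) (g := fun _ => 1)
    (h := fun b js => if 1 ≤ js.1 ∧ (Nat.unpair (js.1 - 1)).1 = b.2 ∧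
      b.1.1.getD js.1 0 = 0 then 0 else js.2)
    (list_range.comp (snd.comp fst)) (const 1) hh
  exact hfold.of_eq fun b => rfl

lemma primrec_FK1 : Primrec₂ (fun (u : List ℕ) (t : ℕ) => sF (fun j => u.getD j 0) t) := by
  apply Primrec₂.mk
  have hmap : Primrec (fun a : List ℕ × ℕ =>
      (List.range (a.1.getD 0 0)).map
        (fun i => bitF (fun j => a.1.getD j 0) a.2 i)) :=
    Primrec.list_map (list_range.comp hu0A) primrec_bitF
  exact (Primrec₂.natPair.comp hu0A (primrec_encL.comp hmap)).of_eq fun a => rfl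

lemma primrec_dig : Primrec₂ dig := by
  have hpow : Primrec₂ (fun (a b : ℕ) => a ^ b) := Primrec₂.unpaired'.mp Nat.Primrec.pow
  exact Primrec₂.mk
    (nat_mod.comp (nat_div.comp snd (hpow.comp (const 2) fst)) (const 2))

lemma primrec_FH1 : Primrec₂ (fun (u : List ℕ) (t : ℕ) => outH1 (u.getD 0 0) t) := by
  apply Primrec₂.mk
  have h := Primrec.nat_casesOn (α := List ℕ × ℕ) (β := ℕ)
    (f := fun a => a.2)
    (g := fun a => (Nat.unpair (a.1.getD 0 0)).1)
    (h := fun a t' => 1 - dig (Nat.unpair t').1 (Nat.unpair (a.1.getD 0 0)).2)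
    snd (fst.comp (Primrec.unpair.comp hu0A))
    (Primrec₂.mk (nat_sub.comp (const 1)
      (primrec_dig.comp (fst.comp (Primrec.unpair.comp snd))
        (snd.comp (Primrec.unpair.comp (hu0A.comp fst))))))
  exact h.of_eq fun a => by rcases a with ⟨u, _ | t⟩ <;> rfl

lemma primrec_FK2 : Primrec₂ (fun (u : List ℕ) (t : ℕ) => sQ (fun j => u.getD j 0) t) := by
  apply Primrec₂.mk
  have h := Primrec.nat_casesOn (α := List ℕ × ℕ) (β := ℕ)
    (f := fun a => a.2)
    (g := fun a => a.1.getD 0 0 + 1)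
    (h := fun a m => if a.1.getD (Nat.unpair m).2 0 ≤ (Nat.unpair m).1 then 0 else 1)
    snd (succ.comp hu0A)
    (Primrec₂.mk (Primrec.ite
      (nat_le.comp
        ((Primrec.list_getD 0).comp (fst.comp fst)
          (snd.comp (Primrec.unpair.comp snd)))
        (fst.comp (Primrec.unpair.comp snd)))
      (const 0) (const 1)))
  exact h.of_eq fun a => by rcases a with ⟨u, _ | t⟩ <;> rfl

def LH2 (u : List ℕ) : ℕ := if Nat.pair (u.getD 0 0) 0 < u.length then u.length else 0

lemma primrec_LH2 : Primrec LH2 := by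
  have hu0 : Primrec (fun u : List ℕ => u.getD 0 0) :=
    (Primrec.list_getD 0).comp Primrec.id (const 0)
  exact Primrec.ite
    (nat_lt.comp (Primrec₂.natPair.comp hu0 (const 0)) list_length)
    list_length (const 0)

lemma primrec_FH2 : Primrec₂ (fun (u : List ℕ) (_ : ℕ) => valH2 (fun j => u.getD j 0)) := by
  apply Primrec₂.mk
  have hh : Primrec₂ (fun (a : List ℕ × ℕ) (js : ℕ × ℕ) =>
      if a.1.getD (Nat.pair js.1 0 + 1) 0 = 1 then js.1 else js.2) := by
    apply Primrec₂.mk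
    exact Primrec.ite
      (Primrec.eq.comp
        ((Primrec.list_getD 0).comp (fst.comp fst)
          (succ.comp (Primrec₂.natPair.comp (fst.comp snd) (const 0))))
        (const 1))
      (fst.comp snd) (snd.comp snd)
  have h := Primrec.list_foldr (α := List ℕ × ℕ) (β := ℕ) (σ := ℕ)
    (f := fun a => List.range (a.1.getD 0 0)) (g := fun _ => 0)
    (h := fun a js => if a.1.getD (Nat.pair js.1 0 + 1) 0 = 1 then js.1 else js.2)
    (list_range.comp hu0A) (const 0) hh
  exact h.of_eq fun a => rfl

end Prim

/-! ### The four word functions are type-2 computable -/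

lemma baire_K1 : BaireComputable K1 := by
  refine baire_of K1 List.length (fun u t => sF (fun j => u.getD j 0) t)
    Primrec.list_length primrec_FK1
    (fun u v h => h.length_le)
    (fun u v huv t ht => sF_congr (fun j hj => prefix_getD huv (lt_of_le_of_lt hj ht) 0))
    ?_
  intro p q hq t
  have hqe : q = fun m => sF p m := Part.mem_some_iff.mp hq
  refine ⟨t + 1, by rw [pref_length]; omega, ?_⟩
  rw [hqe]
  exact sF_congr (fun j hj => pref_getD _ (show j < t + 1 by omega) 0)

lemma baire_H1 : BaireComputable H1 := by
  refine baire_of H1 List.length (fun u t => outH1 (u.getD 0 0) t)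
    Primrec.list_length primrec_FH1
    (fun u v h => h.length_le)
    (fun u v huv t ht => by
      show outH1 (u.getD 0 0) t = outH1 (v.getD 0 0) t
      rw [prefix_getD huv (show 0 < u.length by omega) 0])
    ?_
  intro p q hq t
  have hqe : q = outH1 (p 0) := Part.mem_some_iff.mp hq
  refine ⟨t + 1, by rw [pref_length]; omega, ?_⟩
  show outH1 ((pref p (t + 1)).getD 0 0) t = q t
  rw [hqe, pref_getD _ (show 0 < t + 1 by omega) 0]

lemma baire_K2 : BaireComputable K2 := by
  refine baire_of K2 List.length (fun u t => sQ (fun j => u.getD j 0) t)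
    Primrec.list_length primrec_FK2
    (fun u v h => h.length_le)
    (fun u v huv t ht => sQ_congr (fun j hj => prefix_getD huv (lt_of_le_of_lt hj ht) 0))
    ?_
  intro p q hq t
  have hqe : q = sQ p := Part.mem_some_iff.mp hq
  refine ⟨t + 1, by rw [pref_length]; omega, ?_⟩
  rw [hqe]
  exact sQ_congr (fun j hj => pref_getD _ (show j < t + 1 by omega) 0)

lemma baire_H2 : BaireComputable H2 := by
  refine baire_of H2 LH2 (fun u _ => valH2 (fun j => u.getD j 0))
    primrec_LH2 primrec_FH2 ?_ ?_ ?_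
  · intro u v huv
    unfold LH2
    by_cases hc : Nat.pair (u.getD 0 0) 0 < u.length
    · have hlen : 0 < u.length := by omega
      have h0 : u.getD 0 0 = v.getD 0 0 := prefix_getD huv hlen 0
      have hc' : Nat.pair (v.getD 0 0) 0 < v.length := by
        rw [← h0]; exact lt_of_lt_of_le hc huv.length_le
      rw [if_pos hc, if_pos hc']
      exact huv.length_le
    · rw [if_neg hc]; omega
  · intro u v huv t ht
    have hc : Nat.pair (u.getD 0 0) 0 < u.length := by
      by_contra hc
      rw [LH2, if_neg hc] at ht
      omega
    refine valH2_congr (g := fun j => u.getD j 0) (g' := fun j => v.getD j 0) ?_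
    intro j hj
    have hj' : j ≤ Nat.pair (u.getD 0 0) 0 := hj
    exact prefix_getD huv (show j < u.length by omega) 0
  · intro p q hq t
    have hqe : q = fun _ => valH2 p := Part.mem_some_iff.mp hq
    have h0 : (pref p (Nat.pair (p 0) 0 + t + 1)).getD 0 0 = p 0 :=
      pref_getD _ (show 0 < Nat.pair (p 0) 0 + t + 1 by omega) 0
    have hcond : Nat.pair ((pref p (Nat.pair (p 0) 0 + t + 1)).getD 0 0) 0 <
        (pref p (Nat.pair (p 0) 0 + t + 1)).length := by
      rw [h0, pref_length]; omega
    refine ⟨Nat.pair (p 0) 0 + t + 1, ?_, ?_⟩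
    · show t < LH2 _
      rw [LH2, if_pos hcond, pref_length]; omega
    · rw [hqe]
      refine valH2_congr (g := fun j => (pref p (Nat.pair (p 0) 0 + t + 1)).getD j 0)
        (g' := p) ?_
      intro j hj
      have hj' : j ≤ Nat.pair ((pref p (Nat.pair (p 0) 0 + t + 1)).getD 0 0) 0 := hj
      rw [h0] at hj'
      exact pref_getD _ (show j < Nat.pair (p 0) 0 + t + 1 by omega) 0

/-! ### The two strong Weihrauch reductions -/

lemma star_lpo_nonempty (x : Σ n, Fin n → (ℕ → ℕ)) :
    (starProblem LPOProblem x).Nonempty :=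
  ⟨⟨x.1, fun i => if ∃ k, x.2 i k = 0 then 1 else 0⟩, rfl, fun _ => rfl⟩

lemma red1 : SWRed (starRep repBaire) (starRep repNat) repBaire repNat
    (starProblem LPOProblem) minProblem := by
  refine ⟨H1, K1, baire_H1, baire_K1, ?_⟩
  intro G hG p x hx _
  obtain ⟨hD, hxe⟩ := Part.mem_mk_iff.mp hx
  subst hxe
  have hx2 : ∀ i : Fin (p 0), Classical.choose (hD i) =
      fun k => p (Nat.pair (i : ℕ) k + 1) := by
    intro i
    exact Part.mem_some_iff.mp (Classical.choose_spec (hD i))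
  obtain ⟨q', hq'G, y', hy'δ, hy'min⟩ :=
    hG (fun m => sF p m) (fun m => sF p m) (Part.mem_some _) (minProblem_nonempty _)
  have hy' : y' = q' 0 := Part.mem_some_iff.mp hy'δ
  subst hy'
  have hq0 : q' 0 = Nat.pair (p 0) (cOf p) := minProblem_unique hy'min (min_sF p)
  refine ⟨outH1 (q' 0), ?_, ?_⟩
  · exact Part.mem_bind_iff.mpr ⟨_, Part.mem_some _,
      Part.mem_bind_iff.mpr ⟨q', hq'G, Part.mem_some _⟩⟩
  · have hq0' : outH1 (q' 0) 0 = p 0 := by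
      show (Nat.unpair (q' 0)).1 = p 0
      rw [hq0, Nat.unpair_pair]
    have hqval : ∀ i : ℕ, i < p 0 → outH1 (q' 0) (Nat.pair i 0 + 1) =
        (if ∃ k, p (Nat.pair i k + 1) = 0 then 1 else 0) := by
      intro i hi
      show 1 - dig (Nat.unpair (Nat.pair i 0)).1 (Nat.unpair (q' 0)).2 = _
      rw [hq0, Nat.unpair_pair, Nat.unpair_pair]
      have hd : dig i (cOf p) = gInd p i := by
        unfold cOf
        rw [dig_encL _ ?_ i (by simp [hi])]
        · rw [List.getD_eq_getElem _ _ (by simp [hi])]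
          simp [gInd]
        · intro b hb
          obtain ⟨j, _, rfl⟩ := List.mem_map.mp hb
          unfold gInd; split <;> omega
      rw [hd]
      unfold gInd
      by_cases h : ∃ k, p (Nat.pair i k + 1) = 0 <;> simp [h]
    refine ⟨⟨outH1 (q' 0) 0, fun i => outH1 (q' 0) (Nat.pair (i : ℕ) 0 + 1)⟩, ?_, ?_⟩
    · have hdom : ∀ i : Fin (outH1 (q' 0) 0), ∃ z,
          z ∈ repNat.δ (proj (fun m => outH1 (q' 0) (m + 1)) i) :=
        fun i => ⟨_, Part.mem_some _⟩
      refine mem_part_mk hdom ?_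
      refine congrArg (Sigma.mk (outH1 (q' 0) 0)) (funext fun i => ?_)
      exact Part.mem_some_iff.mp (Classical.choose_spec (hdom i))
    · refine ⟨hq0'.symm, ?_⟩
      intro i
      show outH1 (q' 0) (Nat.pair (i : ℕ) 0 + 1) ∈
        LPOProblem (Classical.choose (hD i))
      rw [hx2 i]
      show _ ∈ ({if ∃ k, p (Nat.pair (i : ℕ) k + 1) = 0 then 1 else 0} : Set ℕ)
      rw [Set.mem_singleton_iff]
      exact hqval i i.isLt

lemma red2 : SWRed repBaire repNat (starRep repBaire) (starRep repNat)
    minProblem (starProblem LPOProblem) := by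
  refine ⟨H2, K2, baire_H2, baire_K2, ?_⟩
  intro G hG p x hx _
  have hxp : x = p := Part.mem_some_iff.mp hx
  subst hxp
  have hdomq : ∀ i : Fin (sQ x 0), ∃ z,
      z ∈ repBaire.δ (proj (fun m => sQ x (m + 1)) i) :=
    fun i => ⟨_, Part.mem_some _⟩
  have hmem : (⟨x 0 + 1, fun j k => if x k ≤ (j : ℕ) then 0 else 1⟩ :
      Σ n, Fin n → (ℕ → ℕ)) ∈ (starRep repBaire).δ (sQ x) := by
    refine mem_part_mk hdomq ?_
    refine congrArg (Sigma.mk (x 0 + 1)) (funext fun i => ?_)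
    refine (Part.mem_some_iff.mp (Classical.choose_spec (hdomq i))).trans ?_
    funext k
    show sQ x (Nat.pair (i : ℕ) k + 1) = _
    show (if x (Nat.unpair (Nat.pair (i : ℕ) k)).2 ≤
        (Nat.unpair (Nat.pair (i : ℕ) k)).1 then 0 else 1) = _
    rw [Nat.unpair_pair]
  obtain ⟨q', hq'G, y', hy'δ, hy'star⟩ := hG (sQ x) _ hmem (star_lpo_nonempty _)
  obtain ⟨hd, he⟩ := Part.mem_mk_iff.mp hy'δ
  subst he
  have hval : ∀ i : Fin (q' 0), Classical.choose (hd i) = q' (Nat.pair (i : ℕ) 0 + 1) :=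
    fun i => Part.mem_some_iff.mp (Classical.choose_spec (hd i))
  obtain ⟨e, hall⟩ := hy'star
  have he' : x 0 + 1 = q' 0 := e
  have hP : ∀ j, j < q' 0 → q' (Nat.pair j 0 + 1) = (if ∃ k, x k ≤ j then 1 else 0) := by
    intro j hj
    have hje : j < x 0 + 1 := by omega
    have h2' : Classical.choose (hd (Fin.cast e ⟨j, hje⟩)) =
        (if ∃ k, (if x k ≤ j then 0 else 1) = 0 then 1 else 0) := hall ⟨j, hje⟩
    have h3 : q' (Nat.pair j 0 + 1) =
        (if ∃ k, (if x k ≤ j then 0 else 1) = 0 then 1 else 0) :=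
      (hval (Fin.cast e ⟨j, hje⟩)).symm.trans h2'
    rw [h3]
    have hcnd : (∃ k, (if x k ≤ j then 0 else 1) = 0) = (∃ k, x k ≤ j) := by
      refine propext ⟨fun ⟨k, hk⟩ => ⟨k, ?_⟩, fun ⟨k, hk⟩ => ⟨k, by simp [hk]⟩⟩
      by_cases h : x k ≤ j
      · exact h
      · simp [h] at hk
    rw [hcnd]
  have hμ : sInf (Set.range x) ∈ minProblem x :=
    ⟨Nat.sInf_mem (Set.range_nonempty x), fun m => Nat.sInf_le ⟨m, rfl⟩⟩
  have hμ0 : sInf (Set.range x) ≤ x 0 := hμ.2 0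
  have hμlt : sInf (Set.range x) < q' 0 := by omega
  have hiff : ∀ j < q' 0, (q' (Nat.pair j 0 + 1) = 1 ↔ sInf (Set.range x) ≤ j) := by
    intro j hj
    rw [hP j hj]
    constructor
    · intro h1
      by_cases h : ∃ k, x k ≤ j
      · obtain ⟨k, hk⟩ := h
        exact le_trans (Nat.sInf_le ⟨k, rfl⟩) hk
      · simp [h] at h1
    · intro h1
      obtain ⟨k, hk⟩ := hμ.1
      rw [if_pos ⟨k, by omega⟩]
  have hv : valH2 q' = sInf (Set.range x) :=
    foldr_first _ _ (q' 0) 0 hiff hμlt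
  refine ⟨fun _ => valH2 q', ?_, valH2 q', Part.mem_some _, by rw [hv]; exact hμ⟩
  exact Part.mem_bind_iff.mpr ⟨sQ x, Part.mem_some _,
    Part.mem_bind_iff.mpr ⟨q', hq'G, Part.mem_some _⟩⟩

end LPOmin

/-- `LPO* ≡_sW min`. -/
theorem lpo_star_equiv_min :
    SWEquiv (starRep repBaire) (starRep repNat) repBaire repNat
      (starProblem LPOProblem) minProblem :=
  ⟨LPOmin.red1, LPOmin.red2⟩
end

section
/- The limit map lim on Baire space is strongly Weihrauch equivalent to the parallelization of LPO. -/
open scoped Classical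

namespace LimLpoAux

/-! ### Arithmetic helpers -/

lemma pair_MM (M : ℕ) : Nat.pair M M = M * M + M + M := by simp [Nat.pair]

lemma pair_le_pair {a b M : ℕ} (ha : a ≤ M) (hb : b ≤ M) :
    Nat.pair a b ≤ Nat.pair M M := by
  rw [pair_MM]
  unfold Nat.pair
  split
  · nlinarith [Nat.mul_le_mul hb hb]
  · nlinarith [Nat.mul_le_mul ha ha]

lemma pair_zero_lt {a b : ℕ} (h : a < b) : Nat.pair a 0 < Nat.pair b 0 := by
  have h1 : Nat.pair a 0 = a * a + a := by simp [Nat.pair]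
  have h2 : Nat.pair b 0 = b * b + b := by simp [Nat.pair]
  rw [h1, h2]; nlinarith

/-- The index in the answer array where question `(n, j)` is answered. -/
def idx (n j : ℕ) : ℕ := Nat.pair (Nat.pair n j) 0

lemma idx_strictMono {n j j' : ℕ} (h : j < j') : idx n j < idx n j' :=
  pair_zero_lt (Nat.pair_lt_pair_right _ h)

lemma le_idx₂ (n j : ℕ) : j ≤ idx n j :=
  le_trans (Nat.right_le_pair n j) (Nat.left_le_pair _ 0)

lemma le_idx₁ (n j : ℕ) : n ≤ idx n j :=
  le_trans (Nat.left_le_pair n j) (Nat.left_le_pair _ 0)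

/-! ### Lists and prefixes -/

lemma getD_of_prefix {u v : List ℕ} (h : u <+: v) {i : ℕ} (hi : i < u.length) (d : ℕ) :
    v.getD i d = u.getD i d := by
  obtain ⟨w, rfl⟩ := h
  exact List.getD_append u w d i hi

lemma length_pref (p : ℕ → ℕ) (m : ℕ) : (pref p m).length = m := by simp [pref]

lemma getD_pref (p : ℕ → ℕ) {m i : ℕ} (h : i < m) (d : ℕ) : (pref p m).getD i d = p i := by
  simp [pref, List.getD_eq_getElem?_getD, List.getElem?_ofFn, h]

lemma findIdx_congr {l : List ℕ} {p q : ℕ → Bool} (h : ∀ x ∈ l, p x = q x) :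
    l.findIdx p = l.findIdx q := by
  induction l with
  | nil => rfl
  | cons a l ih =>
    simp only [List.findIdx_cons, h a (by simp)]
    rw [ih (fun x hx => h x (by simp [hx]))]

lemma map_range_prefix {a b : ℕ} {f g : ℕ → ℕ} (hab : a ≤ b) (h : ∀ n < a, f n = g n) :
    (List.range a).map f <+: (List.range b).map g := by
  refine ⟨((List.range b).drop a).map g, ?_⟩
  have h1 : (List.range a).map f = (List.range a).map g :=
    List.map_congr_left (fun n hn => h n (List.mem_range.mp hn))
  have h2 : (List.range b).take a = List.range a := by
    rw [List.take_range]; congr 1; omega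
  rw [h1, ← List.map_append, ← h2, List.take_append_drop]

/-! ### Generic monotone machines -/

/-- The number of output positions committed on input prefix `u`. -/
def Lb (C : List ℕ → ℕ → Bool) (u : List ℕ) : ℕ :=
  (List.range u.length).findIdx fun n => !C u n

/-- A generic monotone word function: on input `u` it outputs the values `f u n`
for `n` below the first `n` where the readiness test `C u n` fails. -/
def psiOf (C : List ℕ → ℕ → Bool) (f : List ℕ → ℕ → ℕ) (u : List ℕ) : List ℕ :=
  (List.range (Lb C u)).map (f u)

lemma Lb_le_length {C : List ℕ → ℕ → Bool} {u : List ℕ} : Lb C u ≤ u.length :=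
  le_trans List.findIdx_le_length (by simp)

lemma C_of_lt_Lb {C : List ℕ → ℕ → Bool} {u : List ℕ} {n : ℕ} (h : n < Lb C u) :
    C u n = true := by
  have hn : n < (List.range u.length).length := by
    simpa using lt_of_lt_of_le h Lb_le_length
  have := List.not_of_lt_findIdx (p := fun n => !C u n) (xs := List.range u.length) (i := n) h
  simpa [List.getElem_range] using this

lemma le_Lb {C : List ℕ → ℕ → Bool} {u : List ℕ} {k : ℕ} (hk : k ≤ u.length)
    (hC : ∀ n < k, C u n = true) : k ≤ Lb C u := by
  by_contra hlt
  push_neg at hlt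
  have h2 : Lb C u < (List.range u.length).length := by simpa using lt_of_lt_of_le hlt hk
  have := List.findIdx_getElem (p := fun n => !C u n) (xs := List.range u.length)
    (w := show List.findIdx (fun n => !C u n) (List.range u.length) < _ from h2)
  have h3 := hC _ hlt
  rw [List.getElem_range, show (List.findIdx (fun n => !C u n) (List.range u.length)) = Lb C u from rfl, h3] at this
  simp at this

lemma psiOf_getElem? {C : List ℕ → ℕ → Bool} {f : List ℕ → ℕ → ℕ} {u : List ℕ} {n : ℕ}
    (h : n < Lb C u) : (psiOf C f u)[n]? = some (f u n) := by
  simp [psiOf, List.getElem?_map, List.getElem?_range h]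

lemma psiOf_mono {C : List ℕ → ℕ → Bool} {f : List ℕ → ℕ → ℕ}
    (hC : ∀ (u v : List ℕ) (n : ℕ), u <+: v → C u n = true → C v n = true)
    (hf : ∀ (u v : List ℕ) (n : ℕ), u <+: v → C u n = true → f u n = f v n) :
    ∀ u v : List ℕ, u <+: v → psiOf C f u <+: psiOf C f v := by
  intro u v huv
  have hL : Lb C u ≤ Lb C v :=
    le_Lb (le_trans Lb_le_length huv.length_le)
      (fun n hn => hC u v n huv (C_of_lt_Lb hn))
  exact map_range_prefix hL (fun n hn => hf u v n huv (C_of_lt_Lb hn))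

lemma psiOf_primrec {C : List ℕ → ℕ → Bool} {f : List ℕ → ℕ → ℕ}
    (hC : Primrec₂ C) (hf : Primrec₂ f) : Primrec (psiOf C f) := by
  have hlen : Primrec fun u : List ℕ => List.range u.length :=
    Primrec.list_range.comp Primrec.list_length
  have hnot : Primrec₂ fun (u : List ℕ) (n : ℕ) => !C u n :=
    Primrec.not.comp hC
  have hfind : Primrec (Lb C) := Primrec.list_findIdx hlen hnot
  exact Primrec.list_map (Primrec.list_range.comp hfind) hf

end LimLpoAux
namespace LimLpoAux

lemma findIdx_range_lt_iff {b : ℕ} {p : ℕ → Bool} :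
    (List.range b).findIdx p < b ↔ ∃ m < b, p m = true := by
  constructor
  · intro h
    have hlen : (List.range b).findIdx p < (List.range b).length := by simpa using h
    refine ⟨(List.range b).findIdx p, h, ?_⟩
    have := List.findIdx_getElem (p := p) (xs := List.range b) (w := hlen)
    simpa [List.getElem_range] using this
  · rintro ⟨m, hm, hp⟩
    have : ∃ x ∈ List.range b, p x = true := ⟨m, List.mem_range.mpr hm, hp⟩
    simpa using List.findIdx_lt_length_of_exists this

/-! ### Membership in sequence representations -/

lemma mem_seqRep_baire_iff {r : ℕ → ℕ} {x : ℕ → ℕ → ℕ} :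
    x ∈ (seqRep repBaire).δ r ↔ x = fun i => proj r i := by
  show x ∈ Part.mk _ _ ↔ _
  rw [Part.mem_mk_iff]
  constructor
  · rintro ⟨h, rfl⟩
    funext i
    have := Classical.choose_spec (h i)
    simpa [repBaire, Part.mem_some_iff] using this
  · rintro rfl
    have h : ∀ i : ℕ, ∃ y, y ∈ repBaire.δ (proj r i) := fun i => ⟨proj r i, Part.mem_some _⟩
    refine ⟨h, ?_⟩
    funext i
    have := Classical.choose_spec (h i)
    simpa [repBaire, Part.mem_some_iff] using this

lemma mem_seqRep_nat_iff {q y : ℕ → ℕ} :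
    y ∈ (seqRep repNat).δ q ↔ y = fun i => q (Nat.pair i 0) := by
  show y ∈ Part.mk _ _ ↔ _
  rw [Part.mem_mk_iff]
  constructor
  · rintro ⟨h, rfl⟩
    funext i
    have := Classical.choose_spec (h i)
    simpa [repNat, Part.mem_some_iff, proj] using this
  · rintro rfl
    have h : ∀ i : ℕ, ∃ y, y ∈ repNat.δ (proj q i) := fun i => ⟨q (Nat.pair i 0), Part.mem_some _⟩
    refine ⟨h, ?_⟩
    funext i
    have := Classical.choose_spec (h i)
    simpa [repNat, Part.mem_some_iff, proj] using this

lemma limProblem_unique {r q q' : ℕ → ℕ} (h : q ∈ limProblem r) (h' : q' ∈ limProblem r) :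
    q = q' := by
  funext n
  obtain ⟨N1, h1⟩ := h n
  obtain ⟨N2, h2⟩ := h' n
  have e1 := h1 (max N1 N2) (le_max_left _ _)
  have e2 := h2 (max N1 N2) (le_max_right _ _)
  omega

end LimLpoAux
namespace LimLpoAux

/-! ### The readiness test used by the input translations -/

def Cb (u : List ℕ) (c : ℕ) : Bool := decide (Nat.pair (2*c) (2*c) < u.length)

lemma Cb_mono (u v : List ℕ) (c : ℕ) (huv : u <+: v) (h : Cb u c = true) : Cb v c = true := by
  simp only [Cb, decide_eq_true_eq] at *
  exact lt_of_lt_of_le h huv.length_le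

lemma Cb_primrec : Primrec₂ Cb := by
  have hd : Primrec fun x : List ℕ × ℕ => 2 * x.2 := Primrec.nat_double.comp Primrec.snd
  exact PrimrecPred.decide (Primrec.nat_lt.comp (Primrec₂.natPair.comp hd hd) (Primrec.list_length.comp Primrec.fst))

lemma Cb_acc {u : List ℕ} {c a b : ℕ} (h : Cb u c = true) (ha : a ≤ 2*c) (hb : b ≤ 2*c) :
    Nat.pair a b < u.length := by
  simp only [Cb, decide_eq_true_eq] at h
  exact lt_of_le_of_lt (pair_le_pair ha hb) h

lemma Cb_pref {p : ℕ → ℕ} {c n : ℕ} (hc : c ≤ n) :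
    Cb (pref p (Nat.pair (2*n) (2*n) + 1)) c = true := by
  simp only [Cb, decide_eq_true_eq, length_pref]
  have := pair_le_pair (M := 2*n) (a := 2*c) (b := 2*c) (by omega) (by omega)
  omega

/-! ### The input translation for `lim ≤ parallel LPO` -/

/-- Names of the LPO instances: for `c = ⟨⟨n,⟨N,v⟩⟩,t⟩` the value is `0` iff a
counterexample to "`pₘ(n) = v` for all `m ≥ N`" shows up by stage `N + t`. -/
noncomputable def K1f (p : ℕ → ℕ) (c : ℕ) : ℕ :=
  if ∃ m, c.unpair.1.unpair.2.unpair.1 ≤ m ∧ m ≤ c.unpair.1.unpair.2.unpair.1 + c.unpair.2 ∧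
      p (Nat.pair m c.unpair.1.unpair.1) ≠ c.unpair.1.unpair.2.unpair.2 then 0 else 1

def val1 (u : List ℕ) (c : ℕ) : ℕ :=
  if (List.range (c.unpair.1.unpair.2.unpair.1 + c.unpair.2 + 1)).findIdx
      (fun m => decide (c.unpair.1.unpair.2.unpair.1 ≤ m) &&
        !(u.getD (Nat.pair m c.unpair.1.unpair.1) 0 == c.unpair.1.unpair.2.unpair.2))
      < c.unpair.1.unpair.2.unpair.1 + c.unpair.2 + 1 then 0 else 1

lemma val1_eq {u : List ℕ} {p : ℕ → ℕ} {c : ℕ}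
    (hacc : ∀ a b : ℕ, a ≤ 2*c → b ≤ 2*c → u.getD (Nat.pair a b) 0 = p (Nat.pair a b)) :
    val1 u c = K1f p c := by
  have hN : c.unpair.1.unpair.2.unpair.1 ≤ c :=
    le_trans (le_trans (Nat.unpair_left_le _) (Nat.unpair_right_le _)) (Nat.unpair_left_le _)
  have hn : c.unpair.1.unpair.1 ≤ c :=
    le_trans (Nat.unpair_left_le _) (Nat.unpair_left_le _)
  have ht : c.unpair.2 ≤ c := Nat.unpair_right_le _
  unfold val1 K1f
  refine if_congr ?_ rfl rfl
  rw [findIdx_range_lt_iff]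
  constructor
  · rintro ⟨m, hm, hp⟩
    simp only [Bool.and_eq_true, decide_eq_true_eq, Bool.not_eq_eq_eq_not, Bool.not_true,
      beq_eq_false_iff_ne, ne_eq] at hp
    refine ⟨m, hp.1, by omega, ?_⟩
    rw [← hacc m c.unpair.1.unpair.1 (by omega) (by omega)]
    exact hp.2
  · rintro ⟨m, hm1, hm2, hm3⟩
    refine ⟨m, by omega, ?_⟩
    simp only [Bool.and_eq_true, decide_eq_true_eq, Bool.not_eq_eq_eq_not, Bool.not_true,
      beq_eq_false_iff_ne, ne_eq]
    exact ⟨hm1, by rw [hacc m c.unpair.1.unpair.1 (by omega) (by omega)]; exact hm3⟩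

lemma val1_stable (u v : List ℕ) (c : ℕ) (huv : u <+: v) (hC : Cb u c = true) :
    val1 u c = val1 v c := by
  have hN : c.unpair.1.unpair.2.unpair.1 ≤ c :=
    le_trans (le_trans (Nat.unpair_left_le _) (Nat.unpair_right_le _)) (Nat.unpair_left_le _)
  have hn : c.unpair.1.unpair.1 ≤ c :=
    le_trans (Nat.unpair_left_le _) (Nat.unpair_left_le _)
  have ht : c.unpair.2 ≤ c := Nat.unpair_right_le _
  unfold val1
  rw [findIdx_congr (q := fun m => decide (c.unpair.1.unpair.2.unpair.1 ≤ m) &&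
        !(v.getD (Nat.pair m c.unpair.1.unpair.1) 0 == c.unpair.1.unpair.2.unpair.2))]
  intro m hm
  have hmb : m ≤ 2*c := by
    have := List.mem_range.mp hm; omega
  rw [getD_of_prefix huv (Cb_acc hC hmb (by omega)) 0]

lemma val1_primrec : Primrec₂ val1 := by
  have u1 : Primrec fun x : List ℕ × ℕ => x.2.unpair.1 :=
    (Primrec.fst.comp Primrec.unpair).comp Primrec.snd
  have tP : Primrec fun x : List ℕ × ℕ => x.2.unpair.2 :=
    (Primrec.snd.comp Primrec.unpair).comp Primrec.snd
  have nP : Primrec fun x : List ℕ × ℕ => x.2.unpair.1.unpair.1 :=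
    (Primrec.fst.comp Primrec.unpair).comp u1
  have u12 : Primrec fun x : List ℕ × ℕ => x.2.unpair.1.unpair.2 :=
    (Primrec.snd.comp Primrec.unpair).comp u1
  have NP : Primrec fun x : List ℕ × ℕ => x.2.unpair.1.unpair.2.unpair.1 :=
    (Primrec.fst.comp Primrec.unpair).comp u12
  have vP : Primrec fun x : List ℕ × ℕ => x.2.unpair.1.unpair.2.unpair.2 :=
    (Primrec.snd.comp Primrec.unpair).comp u12
  have boundP : Primrec fun x : List ℕ × ℕ =>
      x.2.unpair.1.unpair.2.unpair.1 + x.2.unpair.2 + 1 :=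
    Primrec.succ.comp (Primrec.nat_add.comp NP tP)
  have rangeP : Primrec fun x : List ℕ × ℕ =>
      List.range (x.2.unpair.1.unpair.2.unpair.1 + x.2.unpair.2 + 1) :=
    Primrec.list_range.comp boundP
  have predP : Primrec₂ fun (x : List ℕ × ℕ) (m : ℕ) =>
      (decide (x.2.unpair.1.unpair.2.unpair.1 ≤ m) &&
        !(x.1.getD (Nat.pair m x.2.unpair.1.unpair.1) 0 == x.2.unpair.1.unpair.2.unpair.2)) := by
    have d1 : Primrec fun y : (List ℕ × ℕ) × ℕ =>
        decide (y.1.2.unpair.1.unpair.2.unpair.1 ≤ y.2) :=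
      PrimrecPred.decide (Primrec.nat_le.comp (NP.comp Primrec.fst) Primrec.snd)
    have idxP : Primrec fun y : (List ℕ × ℕ) × ℕ => Nat.pair y.2 y.1.2.unpair.1.unpair.1 :=
      Primrec₂.natPair.comp Primrec.snd (nP.comp Primrec.fst)
    have gP : Primrec fun y : (List ℕ × ℕ) × ℕ =>
        y.1.1.getD (Nat.pair y.2 y.1.2.unpair.1.unpair.1) 0 :=
      (Primrec.list_getD 0).comp (Primrec.fst.comp Primrec.fst) idxP
    have beqP : Primrec fun y : (List ℕ × ℕ) × ℕ =>
        (y.1.1.getD (Nat.pair y.2 y.1.2.unpair.1.unpair.1) 0 ==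
          y.1.2.unpair.1.unpair.2.unpair.2) :=
      Primrec.beq.comp gP (vP.comp Primrec.fst)
    exact Primrec.and.comp d1 (Primrec.not.comp beqP)
  have findP : Primrec fun x : List ℕ × ℕ =>
      (List.range (x.2.unpair.1.unpair.2.unpair.1 + x.2.unpair.2 + 1)).findIdx
        (fun m => decide (x.2.unpair.1.unpair.2.unpair.1 ≤ m) &&
          !(x.1.getD (Nat.pair m x.2.unpair.1.unpair.1) 0 == x.2.unpair.1.unpair.2.unpair.2)) :=
    Primrec.list_findIdx rangeP predP
  exact (Primrec.ite (Primrec.nat_lt.comp findP boundP) (Primrec.const 0) (Primrec.const 1))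

end LimLpoAux
namespace LimLpoAux

/-! ### The input translation for `parallel LPO ≤ lim` -/

noncomputable def K2f (r : ℕ → ℕ) (c : ℕ) : ℕ :=
  if ∃ k < c.unpair.1, r (Nat.pair c.unpair.2.unpair.1 k) = 0 then 1 else 0

def val3 (u : List ℕ) (c : ℕ) : ℕ :=
  if (List.range c.unpair.1).findIdx
      (fun k => u.getD (Nat.pair c.unpair.2.unpair.1 k) 0 == 0) < c.unpair.1 then 1 else 0

lemma val3_eq {u : List ℕ} {p : ℕ → ℕ} {c : ℕ}
    (hacc : ∀ a b : ℕ, a ≤ 2*c → b ≤ 2*c → u.getD (Nat.pair a b) 0 = p (Nat.pair a b)) :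
    val3 u c = K2f p c := by
  have hi : c.unpair.2.unpair.1 ≤ c :=
    le_trans (Nat.unpair_left_le _) (Nat.unpair_right_le _)
  have hm : c.unpair.1 ≤ c := Nat.unpair_left_le _
  unfold val3 K2f
  refine if_congr ?_ rfl rfl
  rw [findIdx_range_lt_iff]
  constructor
  · rintro ⟨k, hk, hp⟩
    simp only [beq_iff_eq] at hp
    exact ⟨k, hk, by rw [← hacc _ k (by omega) (by omega)]; exact hp⟩
  · rintro ⟨k, hk, hp⟩
    refine ⟨k, hk, ?_⟩
    simp only [beq_iff_eq]
    rw [hacc _ k (by omega) (by omega)]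
    exact hp

lemma val3_stable (u v : List ℕ) (c : ℕ) (huv : u <+: v) (hC : Cb u c = true) :
    val3 u c = val3 v c := by
  have hi : c.unpair.2.unpair.1 ≤ c :=
    le_trans (Nat.unpair_left_le _) (Nat.unpair_right_le _)
  unfold val3
  rw [findIdx_congr (q := fun k => v.getD (Nat.pair c.unpair.2.unpair.1 k) 0 == 0)]
  intro k hk
  have hkb : k ≤ 2*c := by
    have h1 := List.mem_range.mp hk
    have h2 : c.unpair.1 ≤ c := Nat.unpair_left_le _
    omega
  rw [getD_of_prefix huv (Cb_acc hC (by omega) hkb) 0]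

lemma val3_primrec : Primrec₂ val3 := by
  have mP : Primrec fun x : List ℕ × ℕ => x.2.unpair.1 :=
    (Primrec.fst.comp Primrec.unpair).comp Primrec.snd
  have iP : Primrec fun x : List ℕ × ℕ => x.2.unpair.2.unpair.1 :=
    (Primrec.fst.comp Primrec.unpair).comp ((Primrec.snd.comp Primrec.unpair).comp Primrec.snd)
  have rangeP : Primrec fun x : List ℕ × ℕ => List.range x.2.unpair.1 :=
    Primrec.list_range.comp mP
  have predP : Primrec₂ fun (x : List ℕ × ℕ) (k : ℕ) =>
      (x.1.getD (Nat.pair x.2.unpair.2.unpair.1 k) 0 == 0) := by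
    have idxP : Primrec fun y : (List ℕ × ℕ) × ℕ => Nat.pair y.1.2.unpair.2.unpair.1 y.2 :=
      Primrec₂.natPair.comp (iP.comp Primrec.fst) Primrec.snd
    have gP : Primrec fun y : (List ℕ × ℕ) × ℕ =>
        y.1.1.getD (Nat.pair y.1.2.unpair.2.unpair.1 y.2) 0 :=
      (Primrec.list_getD 0).comp (Primrec.fst.comp Primrec.fst) idxP
    exact Primrec.beq.comp gP (Primrec.const 0)
  have findP : Primrec fun x : List ℕ × ℕ =>
      (List.range x.2.unpair.1).findIdx
        (fun k => x.1.getD (Nat.pair x.2.unpair.2.unpair.1 k) 0 == 0) :=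
    Primrec.list_findIdx rangeP predP
  exact Primrec.ite (Primrec.nat_lt.comp findP mP) (Primrec.const 1) (Primrec.const 0)

/-! ### The output translation for `lim ≤ parallel LPO` -/

/-- The partial map extracting the limit from the array of LPO answers. -/
def H1 : (ℕ → ℕ) →. (ℕ → ℕ) :=
  fun q => Part.mk (∀ n, ∃ j, q (idx n j) = 0) fun h n => (Nat.find (h n)).unpair.2

def pred2 (u : List ℕ) (n j : ℕ) : Bool :=
  decide (idx n j < u.length) && (u.getD (idx n j) 1 == 0)

def F2 (u : List ℕ) (n : ℕ) : ℕ := (List.range u.length).findIdx (pred2 u n)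

def C2 (u : List ℕ) (n : ℕ) : Bool := decide (F2 u n < u.length)

def val2 (u : List ℕ) (n : ℕ) : ℕ := (F2 u n).unpair.2

lemma pred2_true_iff {u : List ℕ} {n j : ℕ} :
    pred2 u n j = true ↔ idx n j < u.length ∧ u.getD (idx n j) 1 = 0 := by
  simp [pred2]

lemma C2_true_iff {u : List ℕ} {n : ℕ} :
    C2 u n = true ↔ ∃ j < u.length, pred2 u n j = true := by
  simp only [C2, decide_eq_true_eq, F2]
  exact decide_eq_true_iff.trans findIdx_range_lt_iff

lemma pred2_self {u : List ℕ} {n : ℕ} (h : C2 u n = true) : pred2 u n (F2 u n) = true := by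
  simp only [C2, decide_eq_true_eq] at h
  have hlen : F2 u n < (List.range u.length).length := by simpa using h
  have := List.findIdx_getElem (p := pred2 u n) (xs := List.range u.length)
    (w := show List.findIdx (pred2 u n) (List.range u.length) < _ from hlen)
  simpa [List.getElem_range, F2] using this

lemma F2_stable {u v : List ℕ} {n : ℕ} (huv : u <+: v) (h : C2 u n = true) :
    F2 v n = F2 u n := by
  have hF : F2 u n < u.length := by simpa [C2] using h
  have hp := pred2_true_iff.mp (pred2_self h)
  have hlen : F2 u n < (List.range v.length).length := by
    simp; exact lt_of_lt_of_le hF huv.length_le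
  rw [F2, List.findIdx_eq (p := pred2 v n) hlen]
  constructor
  · rw [List.getElem_range]
    rw [pred2_true_iff]
    exact ⟨lt_of_lt_of_le hp.1 huv.length_le,
      by rw [getD_of_prefix huv hp.1 1]; exact hp.2⟩
  · intro j hj
    rw [List.getElem_range]
    have hidxj : idx n j < u.length := lt_trans (idx_strictMono hj) hp.1
    have hfalse : pred2 u n j = false := by
      have hju : j < (List.range u.length).length := by
        simp; exact lt_trans hj hF
      have := List.not_of_lt_findIdx (p := pred2 u n) (xs := List.range u.length) (i := j)
        (by simpa [F2] using hj)
      simpa [List.getElem_range] using this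
    rw [show pred2 v n j = pred2 u n j from ?_, hfalse]
    unfold pred2
    rw [getD_of_prefix huv hidxj 1]
    have h1 : idx n j < v.length := lt_of_lt_of_le hidxj huv.length_le
    simp [hidxj, h1]

lemma C2_mono (u v : List ℕ) (n : ℕ) (huv : u <+: v) (h : C2 u n = true) : C2 v n = true := by
  have hF : F2 u n < u.length := by simpa [C2] using h
  simp only [C2, decide_eq_true_eq, F2_stable huv h]
  exact lt_of_lt_of_le hF huv.length_le

lemma val2_stable (u v : List ℕ) (n : ℕ) (huv : u <+: v) (h : C2 u n = true) :
    val2 u n = val2 v n := by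
  simp [val2, F2_stable huv h]

lemma C2_primrec : Primrec₂ C2 := by
  have predP : Primrec₂ fun (x : List ℕ × ℕ) (j : ℕ) => pred2 x.1 x.2 j := by
    have idxP : Primrec fun y : (List ℕ × ℕ) × ℕ => idx y.1.2 y.2 :=
      Primrec₂.natPair.comp
        (Primrec₂.natPair.comp (Primrec.snd.comp Primrec.fst) Primrec.snd)
        (Primrec.const 0)
    have lenP : Primrec fun y : (List ℕ × ℕ) × ℕ => y.1.1.length :=
      Primrec.list_length.comp (Primrec.fst.comp Primrec.fst)
    have d1 : Primrec fun y : (List ℕ × ℕ) × ℕ => decide (idx y.1.2 y.2 < y.1.1.length) :=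
      PrimrecPred.decide (Primrec.nat_lt.comp idxP lenP)
    have gP : Primrec fun y : (List ℕ × ℕ) × ℕ => y.1.1.getD (idx y.1.2 y.2) 1 :=
      (Primrec.list_getD 1).comp (Primrec.fst.comp Primrec.fst) idxP
    exact Primrec.and.comp d1 (Primrec.beq.comp gP (Primrec.const 0))
  have rangeP : Primrec fun x : List ℕ × ℕ => List.range x.1.length :=
    Primrec.list_range.comp (Primrec.list_length.comp Primrec.fst)
  have findP : Primrec fun x : List ℕ × ℕ => F2 x.1 x.2 :=
    Primrec.list_findIdx rangeP predP
  exact PrimrecPred.decide (Primrec.nat_lt.comp findP (Primrec.list_length.comp Primrec.fst))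

lemma val2_primrec : Primrec₂ val2 := by
  have predP : Primrec₂ fun (x : List ℕ × ℕ) (j : ℕ) => pred2 x.1 x.2 j := by
    have idxP : Primrec fun y : (List ℕ × ℕ) × ℕ => idx y.1.2 y.2 :=
      Primrec₂.natPair.comp
        (Primrec₂.natPair.comp (Primrec.snd.comp Primrec.fst) Primrec.snd)
        (Primrec.const 0)
    have lenP : Primrec fun y : (List ℕ × ℕ) × ℕ => y.1.1.length :=
      Primrec.list_length.comp (Primrec.fst.comp Primrec.fst)
    have d1 : Primrec fun y : (List ℕ × ℕ) × ℕ => decide (idx y.1.2 y.2 < y.1.1.length) :=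
      PrimrecPred.decide (Primrec.nat_lt.comp idxP lenP)
    have gP : Primrec fun y : (List ℕ × ℕ) × ℕ => y.1.1.getD (idx y.1.2 y.2) 1 :=
      (Primrec.list_getD 1).comp (Primrec.fst.comp Primrec.fst) idxP
    exact Primrec.and.comp d1 (Primrec.beq.comp gP (Primrec.const 0))
  have rangeP : Primrec fun x : List ℕ × ℕ => List.range x.1.length :=
    Primrec.list_range.comp (Primrec.list_length.comp Primrec.fst)
  have findP : Primrec fun x : List ℕ × ℕ => F2 x.1 x.2 :=
    Primrec.list_findIdx rangeP predP
  exact (Primrec.snd.comp Primrec.unpair).comp findP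

end LimLpoAux
namespace LimLpoAux

lemma pref_getElem? (q : ℕ → ℕ) {n m : ℕ} (h : n < m) : (pref q m)[n]? = some (q n) := by
  simp [pref, List.getElem?_ofFn, h]

lemma bc_id : BaireComputable (fun q : ℕ → ℕ => Part.some q) := by
  refine ⟨id, Computable.id, fun u v h => h, ?_⟩
  intro p q hq n
  rw [Part.mem_some_iff] at hq
  subst hq
  exact ⟨n+1, by simpa using pref_getElem? _ (Nat.lt_succ_self n)⟩

lemma bc_of_val {Kf : (ℕ → ℕ) → ℕ → ℕ} {val : List ℕ → ℕ → ℕ}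
    (hval : Primrec₂ val)
    (hstable : ∀ u v c, u <+: v → Cb u c = true → val u c = val v c)
    (heq : ∀ (u : List ℕ) (p : ℕ → ℕ) (c : ℕ),
      (∀ a b : ℕ, a ≤ 2*c → b ≤ 2*c → u.getD (Nat.pair a b) 0 = p (Nat.pair a b)) →
      val u c = Kf p c) :
    BaireComputable (fun p => Part.some (Kf p)) := by
  refine ⟨psiOf Cb val, (psiOf_primrec Cb_primrec hval).to_comp,
    psiOf_mono Cb_mono hstable, ?_⟩
  intro p q hq n
  rw [Part.mem_some_iff] at hq
  subst hq
  refine ⟨Nat.pair (2*n) (2*n) + 1, ?_⟩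
  set m := Nat.pair (2*n) (2*n) + 1 with hm
  have h2n : 2*n ≤ Nat.pair (2*n) (2*n) := Nat.left_le_pair _ _
  have hLb : n < Lb Cb (pref p m) := by
    apply lt_of_lt_of_le (Nat.lt_succ_self n)
    apply le_Lb
    · rw [length_pref]; omega
    · intro c hc
      exact Cb_pref (by omega)
  rw [psiOf_getElem? hLb]
  congr 1
  apply heq
  intro a b ha hb
  have hlt : Nat.pair a b < m := by
    have := pair_le_pair (M := 2*n) ha hb
    omega
  exact getD_pref p hlt 0

lemma bc_K1 : BaireComputable (fun p => Part.some (K1f p)) :=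
  bc_of_val val1_primrec val1_stable (fun _ _ _ h => val1_eq h)

lemma bc_K2 : BaireComputable (fun p => Part.some (K2f p)) :=
  bc_of_val val3_primrec val3_stable (fun _ _ _ h => val3_eq h)

lemma bc_H1 : BaireComputable H1 := by
  refine ⟨psiOf C2 val2, (psiOf_primrec C2_primrec val2_primrec).to_comp,
    psiOf_mono C2_mono val2_stable, ?_⟩
  intro q q' hq' n
  obtain ⟨h, hval⟩ := Part.mem_mk_iff.mp hq'
  subst hval
  set J : ℕ → ℕ := fun n' => Nat.find (h n') with hJ
  set m := (Finset.range (n+1)).sup (fun n' => idx n' (J n')) + 1 with hm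
  have hIlt : ∀ n' ≤ n, idx n' (J n') < m := by
    intro n' hn'
    have : idx n' (J n') ≤ (Finset.range (n+1)).sup (fun n'' => idx n'' (J n'')) :=
      Finset.le_sup (f := fun n'' => idx n'' (J n'')) (Finset.mem_range.mpr (by omega))
    omega
  have hC : ∀ n' ≤ n, C2 (pref q m) n' = true := by
    intro n' hn'
    rw [C2_true_iff]
    refine ⟨J n', ?_, ?_⟩
    · rw [length_pref]
      exact lt_of_le_of_lt (le_idx₂ n' (J n')) (hIlt n' hn')
    · rw [pred2_true_iff, length_pref]
      refine ⟨hIlt n' hn', ?_⟩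
      rw [getD_pref q (hIlt n' hn') 1]
      exact Nat.find_spec (h n')
  have hnm : n + 1 ≤ m := by
    have h1 := le_idx₁ n (J n)
    have h2 := hIlt n le_rfl
    omega
  have hLb : n < Lb C2 (pref q m) := by
    apply lt_of_lt_of_le (Nat.lt_succ_self n)
    apply le_Lb
    · rw [length_pref]; omega
    · intro c hc
      exact hC c (by omega)
  refine ⟨m, ?_⟩
  rw [psiOf_getElem? hLb]
  have hF : F2 (pref q m) n = J n := by
    have hJlt : J n < (List.range (pref q m).length).length := by
      simp only [List.length_range, length_pref]
      exact lt_of_le_of_lt (le_idx₂ n (J n)) (hIlt n le_rfl)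
    rw [F2, List.findIdx_eq hJlt]
    constructor
    · rw [List.getElem_range, pred2_true_iff, length_pref]
      refine ⟨hIlt n le_rfl, ?_⟩
      rw [getD_pref q (hIlt n le_rfl) 1]
      exact Nat.find_spec (h n)
    · intro j hj
      rw [List.getElem_range]
      by_contra hcon
      rw [Bool.not_eq_false, pred2_true_iff, length_pref] at hcon
      have : q (idx n j) = 0 := by
        rw [← getD_pref q hcon.1 1]
        exact hcon.2
      exact Nat.find_min (h n) hj this
  simp [val2, hF]
  rfl

end LimLpoAux
namespace LimLpoAux

lemma K1f_zero_iff (x : ℕ → ℕ) (n j : ℕ) :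
    (∃ k, K1f x (Nat.pair (Nat.pair n j) k) = 0) ↔
      ∃ m, j.unpair.1 ≤ m ∧ x (Nat.pair m n) ≠ j.unpair.2 := by
  unfold K1f
  constructor
  · rintro ⟨k, hk⟩
    simp only [Nat.unpair_pair] at hk
    split_ifs at hk with hc
    obtain ⟨m, hm1, hm2, hm3⟩ := hc
    exact ⟨m, hm1, hm3⟩
  · rintro ⟨m, hm1, hm2⟩
    refine ⟨m, ?_⟩
    simp only [Nat.unpair_pair]
    rw [if_pos ⟨m, hm1, by omega, hm2⟩]

lemma K2f_lim (p : ℕ → ℕ) :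
    (fun j => if ∃ k, p (Nat.pair j.unpair.1 k) = 0 then 1 else 0) ∈ limProblem (K2f p) := by
  intro j
  by_cases h : ∃ k, p (Nat.pair j.unpair.1 k) = 0
  · obtain ⟨k0, hk0⟩ := h
    refine ⟨k0 + 1, fun m hm => ?_⟩
    show K2f p (Nat.pair m j) = _
    unfold K2f
    simp only [Nat.unpair_pair]
    rw [if_pos ⟨k0, by omega, hk0⟩, if_pos ⟨k0, hk0⟩]
  · refine ⟨0, fun m _ => ?_⟩
    show K2f p (Nat.pair m j) = _
    unfold K2f
    simp only [Nat.unpair_pair]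
    rw [if_neg (fun hc => h (by obtain ⟨k, _, hk⟩ := hc; exact ⟨k, hk⟩)), if_neg h]

/-- `lim ≤ₛW` parallelization of LPO. -/
lemma dir1 : SWRed repBaire repBaire (seqRep repBaire) (seqRep repNat)
    limProblem (parallelProblem LPOProblem) := by
  refine ⟨H1, fun p => Part.some (K1f p), bc_H1, bc_K1, ?_⟩
  intro G hG p x hx hne
  have hxp : x = p := Part.mem_some_iff.mp hx
  subst hxp
  obtain ⟨q, hqG, y, hyq, hy⟩ := hG (K1f x) (fun i => proj (K1f x) i)
    (mem_seqRep_baire_iff.mpr rfl)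
    ⟨fun i => if ∃ k, proj (K1f x) i k = 0 then 1 else 0, fun i => rfl⟩
  have hyform := mem_seqRep_nat_iff.mp hyq
  have hans : ∀ n j : ℕ, q (idx n j) = 0 ↔
      (∀ m, j.unpair.1 ≤ m → x (Nat.pair m n) = j.unpair.2) := by
    intro n j
    have h1 : q (idx n j) = y (Nat.pair n j) := by rw [hyform]; rfl
    have h2 := hy (Nat.pair n j)
    unfold LPOProblem at h2
    rw [Set.mem_singleton_iff] at h2
    rw [h1, h2]
    have h3 := K1f_zero_iff x n j
    by_cases hc : ∃ k, proj (K1f x) (Nat.pair n j) k = 0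
    · rw [if_pos hc]
      exact iff_of_false one_ne_zero
        (fun hall => (h3.mp hc).elim fun m hm => hm.2 (hall m hm.1))
    · rw [if_neg hc]
      refine iff_of_true rfl ?_
      by_contra hcon
      push_neg at hcon
      obtain ⟨m, hm1, hm2⟩ := hcon
      exact hc (h3.mpr ⟨m, hm1, hm2⟩)
  obtain ⟨ql, hql⟩ := hne
  have hdom : ∀ n, ∃ j, q (idx n j) = 0 := by
    intro n
    obtain ⟨N, hN⟩ := hql n
    refine ⟨Nat.pair N (ql n), ?_⟩
    rw [hans]
    intro m hm
    simp only [Nat.unpair_pair] at hm ⊢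
    exact hN m hm
  refine ⟨fun n => (Nat.find (hdom n)).unpair.2, ?_,
    fun n => (Nat.find (hdom n)).unpair.2, Part.mem_some _, ?_⟩
  · exact Part.mem_bind_iff.mpr ⟨K1f x, Part.mem_some _,
      Part.mem_bind_iff.mpr ⟨q, hqG, mem_part_mk hdom rfl⟩⟩
  · intro n
    have hspec := (hans n (Nat.find (hdom n))).mp (Nat.find_spec (hdom n))
    exact ⟨(Nat.find (hdom n)).unpair.1, fun m hm => hspec m hm⟩

/-- Parallelization of LPO `≤ₛW lim`. -/
lemma dir2 : SWRed (seqRep repBaire) (seqRep repNat) repBaire repBaire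
    (parallelProblem LPOProblem) limProblem := by
  refine ⟨fun q => Part.some q, fun p => Part.some (K2f p), bc_id, bc_K2, ?_⟩
  intro G hG p x hx _hne
  have hxe : x = fun i => proj p i := mem_seqRep_baire_iff.mp hx
  have hlim := K2f_lim p
  obtain ⟨q, hqG, y, hyq, hy⟩ := hG (K2f p) (K2f p) (Part.mem_some _) ⟨_, hlim⟩
  have hyq' : y = q := Part.mem_some_iff.mp hyq
  subst hyq'
  have hq : y = fun j => if ∃ k, p (Nat.pair j.unpair.1 k) = 0 then 1 else 0 :=
    limProblem_unique hy hlim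
  refine ⟨y, ?_, fun i => y (Nat.pair i 0), mem_seqRep_nat_iff.mpr rfl, ?_⟩
  · exact Part.mem_bind_iff.mpr ⟨K2f p, Part.mem_some _,
      Part.mem_bind_iff.mpr ⟨y, hqG, Part.mem_some _⟩⟩
  · intro i
    rw [hxe, hq]
    simp only [Nat.unpair_pair]
    rfl

end LimLpoAux
/-- `lim ≡_sW` parallelization of `LPO`. -/
theorem lim_equiv_parallel_lpo :
    SWEquiv repBaire repBaire (seqRep repBaire) (seqRep repNat)
      limProblem (parallelProblem LPOProblem) :=
  ⟨LimLpoAux.dir1, LimLpoAux.dir2⟩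
end
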